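/- arXiv:2005.12120 — 6 statements merged into one kernel-verified Lean document; each statement's English description precedes it below -/
import Mathlib

section
/- Let Ω ⊆ ℝⁿ be a Lebesgue-measurable set of finite Lebesgue measure, let 1 ≤ p, q < ∞, and let φ : ℝ → ℝ be continuous with |φ(s)| ≤ c₁ + c₂|s|^{p/q} for all s ∈ ℝ, where c₁ ∈ ℝ and c₂ ≥ 0. Then the superposition operator Φ is continuous from L_p(Ω) to L_q(Ω): for every x ∈ L_p(Ω) and every sequence (x_k) in L_p(Ω) with ‖x_k − x‖_{L_p(Ω)} → 0, one has ‖Φ(x_k) − Φ(x)‖_{L_q(Ω)} → 0. -/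
set_option maxHeartbeats 1000000

open MeasureTheory Filter

/-- Under the growth condition `|φ(s)| ≤ c₁ + c₂ |s|^(p/q)`, the
superposition operator `Φ(x) = φ ∘ x` is continuous from `L_p(Ω)` to `L_q(Ω)`:
if `‖x_k − x‖_{L_p(Ω)} → 0` then `‖Φ(x_k) − Φ(x)‖_{L_q(Ω)} → 0`. -/
theorem superposition_continuous_Lp_to_Lq
    {n : ℕ} (Ω : Set (Fin n → ℝ)) (hΩ : MeasurableSet Ω) (hΩfin : volume Ω < ⊤)
    (p q : ℝ) (hp : 1 ≤ p) (hq : 1 ≤ q)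
    (φ : ℝ → ℝ) (hφ : Continuous φ)
    (c₁ c₂ : ℝ) (hc₂ : 0 ≤ c₂)
    (hgrowth : ∀ s : ℝ, |φ s| ≤ c₁ + c₂ * |s| ^ (p / q))
    (x : (Fin n → ℝ) → ℝ) (xk : ℕ → (Fin n → ℝ) → ℝ)
    (hx : MemLp x (ENNReal.ofReal p) (volume.restrict Ω))
    (hxk : ∀ k, MemLp (xk k) (ENNReal.ofReal p) (volume.restrict Ω))
    (hconv : Tendsto
      (fun k => eLpNorm (xk k - x) (ENNReal.ofReal p) (volume.restrict Ω))
      atTop (nhds 0)) :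
    Tendsto
      (fun k => eLpNorm ((fun ω => φ (xk k ω)) - fun ω => φ (x ω))
        (ENNReal.ofReal q) (volume.restrict Ω))
      atTop (nhds 0) := by
  set μ := volume.restrict Ω with hμdef
  haveI : IsFiniteMeasure μ := ⟨by rwa [Measure.restrict_apply_univ]⟩
  have hp0 : (0:ℝ) < p := lt_of_lt_of_le one_pos hp
  have hq0 : (0:ℝ) < q := lt_of_lt_of_le one_pos hq
  have hr : (0:ℝ) < p / q := div_pos hp0 hq0
  set P := ENNReal.ofReal p with hPdef
  set Q := ENNReal.ofReal q with hQdef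
  have hP1 : 1 ≤ P := ENNReal.one_le_ofReal.mpr hp
  have hQ1 : 1 ≤ Q := ENNReal.one_le_ofReal.mpr hq
  have hP0 : P ≠ 0 := (lt_of_lt_of_le one_pos hP1).ne'
  have hQ0 : Q ≠ 0 := (lt_of_lt_of_le one_pos hQ1).ne'
  have hPtop : P ≠ ⊤ := ENNReal.ofReal_ne_top
  have hQtop : Q ≠ ⊤ := ENNReal.ofReal_ne_top
  have hQP : Q * ENNReal.ofReal (p / q) = P := by
    rw [hQdef, ← ENNReal.ofReal_mul hq0.le, hPdef]
    congr 1
    field_simp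
  -- continuity of t ↦ |t| ^ (p/q)
  have hcontrpow : Continuous fun t : ℝ => |t| ^ (p / q) :=
    continuous_abs.rpow_const fun _ => Or.inr hr.le
  -- the rpow of an ℒp function is in ℒq
  have hrpmem : ∀ u : (Fin n → ℝ) → ℝ, MemLp u P μ →
      MemLp (fun ω => |u ω| ^ (p / q)) Q μ := by
    intro u hu
    refine ⟨hcontrpow.comp_aestronglyMeasurable hu.1, ?_⟩
    have h1 : eLpNorm (fun ω => ‖u ω‖ ^ (p / q)) Q μ
        = eLpNorm u (Q * ENNReal.ofReal (p / q)) μ ^ (p / q) :=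
      eLpNorm_norm_rpow u hr
    simp only [Real.norm_eq_abs] at h1
    rw [h1, hQP]
    exact ENNReal.rpow_lt_top_of_nonneg hr.le hu.2.ne
  -- composition with φ sends ℒp to ℒq
  have hφmem : ∀ u : (Fin n → ℝ) → ℝ, MemLp u P μ →
      MemLp (fun ω => φ (u ω)) Q μ := by
    intro u hu
    have hbound : MemLp (fun ω => |c₁| + c₂ * |u ω| ^ (p / q)) Q μ :=
      (memLp_const |c₁|).add ((hrpmem u hu).const_mul c₂)
    refine hbound.of_le (hφ.comp_aestronglyMeasurable hu.1)
      (Filter.Eventually.of_forall fun ω => ?_)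
    have h0 : (0:ℝ) ≤ |c₁| + c₂ * |u ω| ^ (p / q) := by positivity
    rw [Real.norm_eq_abs, Real.norm_eq_abs, abs_of_nonneg h0]
    have := hgrowth (u ω)
    have := le_abs_self c₁
    linarith
  -- uniform integrability of the xk in ℒp
  have hUIx : UnifIntegrable xk P μ := unifIntegrable_of_tendsto_Lp hP1 hPtop hxk hx hconv
  -- uniform integrability of φ ∘ xk in ℒq
  have hUI : UnifIntegrable (fun k ω => φ (xk k ω)) Q μ := by
    intro ε hε
    set a := ε / (2 * (c₂ + 1)) with hadef
    set b := ε / (2 * (|c₁| + 1)) with hbdef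
    have ha0 : 0 < a := by positivity
    have hb0 : 0 < b := by positivity
    obtain ⟨δ₁, hδ₁, hδ₁'⟩ := hUIx (Real.rpow_pos_of_pos ha0 (q / p))
    set δ₂ := b ^ q with hδ₂def
    have hδ₂0 : 0 < δ₂ := Real.rpow_pos_of_pos hb0 q
    refine ⟨min δ₁ δ₂, lt_min hδ₁ hδ₂0, fun i s hs hμs => ?_⟩
    have hμs₁ : μ s ≤ ENNReal.ofReal δ₁ :=
      hμs.trans (ENNReal.ofReal_le_ofReal (min_le_left _ _))
    have hμs₂ : μ s ≤ ENNReal.ofReal δ₂ :=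
      hμs.trans (ENNReal.ofReal_le_ofReal (min_le_right _ _))
    -- pointwise bound
    have hpt : ∀ ω, ‖s.indicator (fun ω => φ (xk i ω)) ω‖ ≤
        ‖s.indicator (fun _ => |c₁|) ω + c₂ * |s.indicator (xk i) ω| ^ (p / q)‖ := by
      intro ω
      by_cases hω : ω ∈ s
      · simp only [Set.indicator_of_mem hω]
        have h0 : (0:ℝ) ≤ |c₁| + c₂ * |xk i ω| ^ (p / q) := by positivity
        rw [Real.norm_eq_abs, Real.norm_eq_abs, abs_of_nonneg h0]
        have := hgrowth (xk i ω)
        have := le_abs_self c₁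
        linarith
      · simp only [Set.indicator_of_notMem hω, norm_zero]
        exact norm_nonneg _
    have hstep2 : eLpNorm (s.indicator fun ω => φ (xk i ω)) Q μ ≤
        eLpNorm (fun ω => s.indicator (fun _ => |c₁|) ω
          + c₂ * |s.indicator (xk i) ω| ^ (p / q)) Q μ := eLpNorm_mono hpt
    have hmeas1 : AEStronglyMeasurable (s.indicator fun _ => |c₁|) μ :=
      (stronglyMeasurable_const.indicator hs).aestronglyMeasurable
    have hmeas2 : AEStronglyMeasurable
        (fun ω => c₂ * |s.indicator (xk i) ω| ^ (p / q)) μ :=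
      (continuous_const.mul hcontrpow).comp_aestronglyMeasurable ((hxk i).1.indicator hs)
    have hstep3 : eLpNorm (fun ω => s.indicator (fun _ => |c₁|) ω
          + c₂ * |s.indicator (xk i) ω| ^ (p / q)) Q μ ≤
        eLpNorm (s.indicator fun _ => |c₁|) Q μ
          + eLpNorm (fun ω => c₂ * |s.indicator (xk i) ω| ^ (p / q)) Q μ :=
      eLpNorm_add_le hmeas1 hmeas2 hQ1
    -- first term
    have hterm1 : eLpNorm (s.indicator fun _ => |c₁|) Q μ ≤ ENNReal.ofReal (ε / 2) := by
      rw [eLpNorm_indicator_const hs hQ0 hQtop]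
      have hQr : Q.toReal = q := ENNReal.toReal_ofReal hq0.le
      rw [hQr]
      have h1 : μ s ^ (1 / q) ≤ ENNReal.ofReal b := by
        calc μ s ^ (1 / q) ≤ ENNReal.ofReal δ₂ ^ (1 / q) :=
              ENNReal.rpow_le_rpow hμs₂ (by positivity)
          _ = ENNReal.ofReal (δ₂ ^ (1 / q)) :=
              ENNReal.ofReal_rpow_of_nonneg hδ₂0.le (by positivity)
          _ = ENNReal.ofReal b := by
              rw [hδ₂def, ← Real.rpow_mul hb0.le, mul_one_div, div_self hq0.ne',
                Real.rpow_one]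
      have h2 : (‖(|c₁|)‖₊ : ENNReal) = ENNReal.ofReal |c₁| := by
        rw [← enorm_eq_nnnorm, ← ofReal_norm, Real.norm_eq_abs, abs_abs]
      calc (‖(|c₁|)‖₊ : ENNReal) * μ s ^ (1 / q)
          ≤ ENNReal.ofReal |c₁| * ENNReal.ofReal b := by
            rw [h2]; exact mul_le_mul_right h1 _
        _ = ENNReal.ofReal (|c₁| * b) := (ENNReal.ofReal_mul (abs_nonneg c₁)).symm
        _ ≤ ENNReal.ofReal (ε / 2) := by
            apply ENNReal.ofReal_le_ofReal
            have hc1 : |c₁| / (|c₁| + 1) ≤ 1 :=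
              (div_le_one (by positivity)).mpr (by linarith [abs_nonneg c₁])
            rw [hbdef, mul_div_assoc']
            rw [div_le_div_iff₀ (by positivity) (by positivity)]
            nlinarith [abs_nonneg c₁, hε.le]
    -- second term
    have hterm2 : eLpNorm (fun ω => c₂ * |s.indicator (xk i) ω| ^ (p / q)) Q μ ≤
        ENNReal.ofReal (ε / 2) := by
      have hsmul : eLpNorm (fun ω => c₂ * |s.indicator (xk i) ω| ^ (p / q)) Q μ ≤
          (‖c₂‖₊ : ENNReal) * eLpNorm (fun ω => |s.indicator (xk i) ω| ^ (p / q)) Q μ := by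
        have h := eLpNorm_const_smul_le (c := c₂)
          (f := fun ω => |s.indicator (xk i) ω| ^ (p / q)) (p := Q) (μ := μ)
        rw [enorm_eq_nnnorm] at h
        exact h
      have hr1 : eLpNorm (fun ω => |s.indicator (xk i) ω| ^ (p / q)) Q μ
          = eLpNorm (s.indicator (xk i)) P μ ^ (p / q) := by
        have := eLpNorm_norm_rpow (s.indicator (xk i)) hr (p := Q) (μ := μ)
        simp only [Real.norm_eq_abs] at this
        rw [this, hQP]
      have hr2 : eLpNorm (s.indicator (xk i)) P μ ^ (p / q) ≤ ENNReal.ofReal a := by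
        calc eLpNorm (s.indicator (xk i)) P μ ^ (p / q)
            ≤ ENNReal.ofReal (a ^ (q / p)) ^ (p / q) :=
              ENNReal.rpow_le_rpow (hδ₁' i s hs hμs₁) hr.le
          _ = ENNReal.ofReal ((a ^ (q / p)) ^ (p / q)) :=
              ENNReal.ofReal_rpow_of_nonneg (by positivity) hr.le
          _ = ENNReal.ofReal a := by
              rw [← Real.rpow_mul ha0.le, div_mul_div_comm, mul_comm q p,
                div_self (by positivity), Real.rpow_one]
      have hc2n : (‖c₂‖₊ : ENNReal) = ENNReal.ofReal c₂ := by
        rw [← enorm_eq_nnnorm, ← ofReal_norm, Real.norm_eq_abs, abs_of_nonneg hc₂]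
      calc eLpNorm (fun ω => c₂ * |s.indicator (xk i) ω| ^ (p / q)) Q μ
          ≤ (‖c₂‖₊ : ENNReal) * eLpNorm (fun ω => |s.indicator (xk i) ω| ^ (p / q)) Q μ :=
            hsmul
        _ ≤ ENNReal.ofReal c₂ * ENNReal.ofReal a := by
            rw [hc2n, hr1]; exact mul_le_mul_right hr2 _
        _ = ENNReal.ofReal (c₂ * a) := (ENNReal.ofReal_mul hc₂).symm
        _ ≤ ENNReal.ofReal (ε / 2) := by
            apply ENNReal.ofReal_le_ofReal
            have hc1 : c₂ / (c₂ + 1) ≤ 1 :=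
              (div_le_one (by positivity)).mpr (by linarith)
            rw [hadef, mul_div_assoc']
            rw [div_le_div_iff₀ (by positivity) (by positivity)]
            nlinarith [hε.le]
    calc eLpNorm (s.indicator fun ω => φ (xk i ω)) Q μ
        ≤ eLpNorm (s.indicator fun _ => |c₁|) Q μ
          + eLpNorm (fun ω => c₂ * |s.indicator (xk i) ω| ^ (p / q)) Q μ :=
          hstep2.trans hstep3
      _ ≤ ENNReal.ofReal (ε / 2) + ENNReal.ofReal (ε / 2) := add_le_add hterm1 hterm2
      _ = ENNReal.ofReal ε := by
          rw [← ENNReal.ofReal_add (by positivity) (by positivity), add_halves]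
  -- convergence in measure of φ ∘ xk
  have hinM : TendstoInMeasure μ xk atTop x :=
    tendstoInMeasure_of_tendsto_eLpNorm hP0 (fun k => (hxk k).1) hx.1 hconv
  have hφinM : TendstoInMeasure μ (fun k ω => φ (xk k ω)) atTop (fun ω => φ (x ω)) := by
    intro ε hε
    refine tendsto_of_subseq_tendsto fun ns hns => ?_
    have h' : TendstoInMeasure μ (fun j => xk (ns j)) atTop x :=
      fun δ hδ => (hinM δ hδ).comp hns
    obtain ⟨ms, -, hae⟩ := h'.exists_seq_tendsto_ae
    have haeφ : ∀ᵐ ω ∂μ, Tendsto (fun j => φ (xk (ns (ms j)) ω)) atTop (nhds (φ (x ω))) :=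
      hae.mono fun ω hω => ((hφ.tendsto _).comp hω)
    have := tendstoInMeasure_of_tendsto_ae
      (f := fun j ω => φ (xk (ns (ms j)) ω)) (g := fun ω => φ (x ω))
      (fun j => hφ.comp_aestronglyMeasurable (hxk (ns (ms j))).1) haeφ
    exact ⟨ms, this ε hε⟩
  exact tendsto_Lp_finite_of_tendstoInMeasure hQ1 hQtop
    (fun k => hφ.comp_aestronglyMeasurable (hxk k).1) (hφmem x hx) hUI hφinM
end

section
/- Let Y be a real Banach space and A : Y → Y a bounded linear operator with ‖exp(s·A)‖ ≤ M e^{−μ s} for all s ≥ 0, where M ≥ 1 and μ > 0. Let t₁, t₂ : ℝ_{≥0} → ℝ_{≥0} be functions with t₁(T) ≤ t₂(T) ≤ T for all T and t₂(T) − t₁(T) → ∞ as T → ∞. For each T > 0 let r_T : ℝ → Y be continuous and λ_T : ℝ → Y satisfy λ_T(t) = exp((t₂(T)−t)·A) λ_T(t₂(T)) + ∫_t^{t₂(T)} exp((s−t)·A) r_T(s) ds for all t ∈ [t₁(T), t₂(T)]. Assume sup_{T>0} ‖λ_T(t₂(T))‖_Y < ∞ and sup_{t ∈ [t₁(T), t₂(T)]}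 ‖r_T(t)‖_Y → 0 as T → ∞. Then the adjoints satisfy an interval turnpike property: for every ε > 0 there exists T₀ > 0 such that for all T ≥ T₀ and all t ∈ [t₁(T), t₁(T) + (t₂(T)−t₁(T))/2], ‖λ_T(t)‖_Y ≤ ε. -/
open MeasureTheory intervalIntegral Filter Topology

private lemma exp_integral_aux {μ t b : ℝ} (hμ : 0 < μ) :
    ∫ s in t..b, Real.exp (-μ * (s - t)) = (1 - Real.exp (-μ * (b - t))) / μ := by
  have hderiv : ∀ x ∈ Set.uIcc t b,
      HasDerivAt (fun s => -(Real.exp (-μ * (s - t))) / μ) (Real.exp (-μ * (x - t))) x := by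
    intro x _
    have h1 : HasDerivAt (fun s : ℝ => -μ * (s - t)) (-μ) x := by
      simpa using ((hasDerivAt_id x).sub_const t).const_mul (-μ)
    have h2 : HasDerivAt (fun s => Real.exp (-μ * (s - t)))
        (Real.exp (-μ * (x - t)) * (-μ)) x := (Real.hasDerivAt_exp _).comp x h1
    have h3 := (h2.neg).div_const μ
    convert h3 using 1
    · rfl
    · rfl
    · rfl
    · rw [mul_neg, neg_neg, mul_div_assoc, div_self hμ.ne', mul_one]
  have hint : IntervalIntegrable (fun s => Real.exp (-μ * (s - t))) volume t b :=
    (Real.continuous_exp.comp (by continuity)).intervalIntegrable t b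
  have := intervalIntegral.integral_eq_sub_of_hasDerivAt hderiv hint
  rw [this]
  simp only [sub_self, mul_zero, Real.exp_zero]
  ring

/-- (Bounded-generator adjoint turnpike for exponentially stable `A`.)
If `‖exp(sA)‖ ≤ M e^{−μs}` for `s ≥ 0`, `t₁(T) ≤ t₂(T) ≤ T` with
`t₂(T) − t₁(T) → ∞`, each `λ_T` solves the mild backward equation with residual
`r_T` on `[t₁(T), t₂(T)]`, the terminal values `λ_T(t₂(T))` are uniformly bounded,
and `sup_{[t₁(T),t₂(T)]} ‖r_T‖ → 0`, then for every `ε > 0` there is `T₀ > 0` such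
that `‖λ_T(t)‖ ≤ ε` for all `T ≥ T₀` and `t ∈ [t₁(T), t₁(T) + (t₂(T)−t₁(T))/2]`. -/
theorem adjoint_interval_turnpike_exponentially_stable
    {Y : Type*} [NormedAddCommGroup Y] [NormedSpace ℝ Y] [CompleteSpace Y]
    (A : Y →L[ℝ] Y) (M μ : ℝ) (hM : 1 ≤ M) (hμ : 0 < μ)
    (hstab : ∀ s : ℝ, 0 ≤ s → ‖NormedSpace.exp (s • A)‖ ≤ M * Real.exp (-μ * s))
    (t₁ t₂ : ℝ → ℝ) (ht₁ : ∀ T, 0 ≤ t₁ T) (ht₁₂ : ∀ T, t₁ T ≤ t₂ T)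
    (ht₂ : ∀ T, t₂ T ≤ T)
    (hgrow : Tendsto (fun T => t₂ T - t₁ T) atTop atTop)
    (r : ℝ → ℝ → Y) (hr : ∀ T > (0 : ℝ), Continuous (r T))
    (lam : ℝ → ℝ → Y)
    (hlam : ∀ T > (0 : ℝ), ∀ t ∈ Set.Icc (t₁ T) (t₂ T), lam T t =
      (NormedSpace.exp ((t₂ T - t) • A)) (lam T (t₂ T)) +
        ∫ s in t..(t₂ T), (NormedSpace.exp ((s - t) • A)) (r T s))
    (hbdd : ∃ B : ℝ, ∀ T > (0 : ℝ), ‖lam T (t₂ T)‖ ≤ B)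
    (hres : ∀ ε > (0 : ℝ), ∃ T₀ > (0 : ℝ), ∀ T ≥ T₀,
      ∀ t ∈ Set.Icc (t₁ T) (t₂ T), ‖r T t‖ ≤ ε) :
    ∀ ε > (0 : ℝ), ∃ T₀ > (0 : ℝ), ∀ T ≥ T₀,
      ∀ t ∈ Set.Icc (t₁ T) (t₁ T + (t₂ T - t₁ T) / 2), ‖lam T t‖ ≤ ε := by
  intro ε hε
  obtain ⟨B, hB⟩ := hbdd
  have hB0 : 0 ≤ B := le_trans (norm_nonneg _) (hB 1 one_pos)
  have hM0 : 0 < M := lt_of_lt_of_le one_pos hM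
  -- residual smallness threshold
  set ε₁ : ℝ := ε * μ / (2 * M) with hε₁def
  have hε₁pos : 0 < ε₁ := by positivity
  obtain ⟨T₁, hT₁pos, hT₁⟩ := hres ε₁ hε₁pos
  -- terminal term smallness threshold
  have htend : Tendsto (fun T => M * B * Real.exp (-(μ / 2 * (t₂ T - t₁ T))))
      atTop (𝓝 0) := by
    have h1 : Tendsto (fun T => μ / 2 * (t₂ T - t₁ T)) atTop atTop :=
      hgrow.const_mul_atTop (by positivity)
    have h2 : Tendsto (fun T => Real.exp (-(μ / 2 * (t₂ T - t₁ T)))) atTop (𝓝 0) :=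
      Real.tendsto_exp_neg_atTop_nhds_zero.comp h1
    simpa using h2.const_mul (M * B)
  have hev : ∀ᶠ T in atTop, M * B * Real.exp (-(μ / 2 * (t₂ T - t₁ T))) < ε / 2 :=
    htend.eventually_lt_const (by positivity)
  obtain ⟨T₂, hT₂⟩ := eventually_atTop.1 hev
  refine ⟨max 1 (max T₁ T₂), lt_of_lt_of_le one_pos (le_max_left _ _), ?_⟩
  intro T hT t ht
  have hTpos : (0 : ℝ) < T := lt_of_lt_of_le one_pos (le_trans (le_max_left _ _) hT)
  have hTT₁ : T₁ ≤ T := le_trans (le_trans (le_max_left _ _) (le_max_right _ _)) hT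
  have hTT₂ : T₂ ≤ T := le_trans (le_trans (le_max_right _ _) (le_max_right _ _)) hT
  set L : ℝ := t₂ T - t₁ T with hL
  have hL0 : 0 ≤ L := sub_nonneg.2 (ht₁₂ T)
  have ht' : t ∈ Set.Icc (t₁ T) (t₂ T) := by
    refine ⟨ht.1, le_trans ht.2 ?_⟩
    rw [hL]; linarith
  have htle : t₂ T - t ≥ L / 2 := by
    have := ht.2; rw [hL] at this ⊢; linarith
  rw [hlam T hTpos t ht']
  have hterm1 : ‖(NormedSpace.exp ((t₂ T - t) • A)) (lam T (t₂ T))‖ ≤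
      M * B * Real.exp (-(μ / 2 * L)) := by
    have h1 : ‖(NormedSpace.exp ((t₂ T - t) • A)) (lam T (t₂ T))‖ ≤
        ‖NormedSpace.exp ((t₂ T - t) • A)‖ * ‖lam T (t₂ T)‖ :=
      (NormedSpace.exp ((t₂ T - t) • A)).le_opNorm _
    have h2 : ‖NormedSpace.exp ((t₂ T - t) • A)‖ ≤ M * Real.exp (-μ * (t₂ T - t)) :=
      hstab _ (by linarith)
    have h3 : Real.exp (-μ * (t₂ T - t)) ≤ Real.exp (-(μ / 2 * L)) := by
      apply Real.exp_le_exp.2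
      nlinarith
    calc ‖(NormedSpace.exp ((t₂ T - t) • A)) (lam T (t₂ T))‖
        ≤ (M * Real.exp (-μ * (t₂ T - t))) * ‖lam T (t₂ T)‖ :=
          h1.trans (mul_le_mul_of_nonneg_right h2 (norm_nonneg _))
      _ ≤ (M * Real.exp (-(μ / 2 * L))) * B := by
          apply mul_le_mul _ (hB T hTpos) (norm_nonneg _) (by positivity)
          exact mul_le_mul_of_nonneg_left h3 (le_of_lt hM0)
      _ = M * B * Real.exp (-(μ / 2 * L)) := by ring
  have hterm2 : ‖∫ s in t..(t₂ T), (NormedSpace.exp ((s - t) • A)) (r T s)‖ ≤ ε / 2 := by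
    have hgint : IntervalIntegrable (fun s => M * ε₁ * Real.exp (-μ * (s - t)))
        volume t (t₂ T) :=
      (continuous_const.mul (Real.continuous_exp.comp
        (continuous_const.mul (continuous_id.sub continuous_const)))).intervalIntegrable _ _
    have hbound : ∀ᵐ s ∂(volume.restrict (Set.uIoc t (t₂ T))),
        ‖(NormedSpace.exp ((s - t) • A)) (r T s)‖ ≤ M * ε₁ * Real.exp (-μ * (s - t)) := by
      refine (ae_restrict_iff' measurableSet_uIoc).2 (Filter.Eventually.of_forall ?_)
      intro s hs
      rw [Set.uIoc_of_le ht'.2] at hs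
      have hst : t ≤ s := le_of_lt hs.1
      have hsmem : s ∈ Set.Icc (t₁ T) (t₂ T) := ⟨le_trans ht'.1 hst, hs.2⟩
      have h1 : ‖(NormedSpace.exp ((s - t) • A)) (r T s)‖ ≤
          ‖NormedSpace.exp ((s - t) • A)‖ * ‖r T s‖ :=
        (NormedSpace.exp ((s - t) • A)).le_opNorm _
      have h2 : ‖NormedSpace.exp ((s - t) • A)‖ ≤ M * Real.exp (-μ * (s - t)) :=
        hstab _ (by linarith)
      have h3 : ‖r T s‖ ≤ ε₁ := hT₁ T hTT₁ s hsmem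
      calc ‖(NormedSpace.exp ((s - t) • A)) (r T s)‖
          ≤ (M * Real.exp (-μ * (s - t))) * ε₁ := by
            refine h1.trans (mul_le_mul h2 h3 (norm_nonneg _) ?_)
            positivity
        _ = M * ε₁ * Real.exp (-μ * (s - t)) := by ring
    have h4 := intervalIntegral.norm_integral_le_of_norm_le ht'.2
      (((ae_restrict_iff' measurableSet_uIoc).1 hbound).mono
        fun s hs hs' => hs (by rwa [Set.uIoc_of_le ht'.2])) hgint
    have h5 : ∫ s in t..(t₂ T), M * ε₁ * Real.exp (-μ * (s - t)) =
        M * ε₁ * ((1 - Real.exp (-μ * (t₂ T - t))) / μ) := by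
      rw [intervalIntegral.integral_const_mul, exp_integral_aux hμ]
    have h6 : M * ε₁ * ((1 - Real.exp (-μ * (t₂ T - t))) / μ) ≤ M * ε₁ / μ := by
      have hexp : 0 ≤ Real.exp (-μ * (t₂ T - t)) := Real.exp_nonneg _
      have heq : M * ε₁ * ((1 - Real.exp (-μ * (t₂ T - t))) / μ) =
          M * ε₁ * (1 - Real.exp (-μ * (t₂ T - t))) / μ := by ring
      have hexp1 : Real.exp (-μ * (t₂ T - t)) ≤ 1 :=
        Real.exp_le_one_iff.2 (by nlinarith [htle, hL0])
      rw [heq]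
      refine (div_le_div_iff_of_pos_right hμ).2 ?_
      nlinarith [mul_nonneg (mul_nonneg hM0.le hε₁pos.le) hexp]
    have h7 : M * ε₁ / μ = ε / 2 := by
      rw [hε₁def]; field_simp
    calc ‖∫ s in t..(t₂ T), (NormedSpace.exp ((s - t) • A)) (r T s)‖
        ≤ |∫ s in t..(t₂ T), M * ε₁ * Real.exp (-μ * (s - t))| := h4.trans (le_abs_self _)
      _ = M * ε₁ * ((1 - Real.exp (-μ * (t₂ T - t))) / μ) := by
          rw [h5, abs_of_nonneg]
          have hexp : Real.exp (-μ * (t₂ T - t)) ≤ 1 := by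
            apply Real.exp_le_one_iff.2
            nlinarith [htle, hL0]
          have h1e : 0 ≤ 1 - Real.exp (-μ * (t₂ T - t)) := by linarith
          positivity
      _ ≤ M * ε₁ / μ := h6
      _ = ε / 2 := h7
  calc ‖(NormedSpace.exp ((t₂ T - t) • A)) (lam T (t₂ T)) +
        ∫ s in t..(t₂ T), (NormedSpace.exp ((s - t) • A)) (r T s)‖
      ≤ ‖(NormedSpace.exp ((t₂ T - t) • A)) (lam T (t₂ T))‖ +
        ‖∫ s in t..(t₂ T), (NormedSpace.exp ((s - t) • A)) (r T s)‖ := norm_add_le _ _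
    _ ≤ M * B * Real.exp (-(μ / 2 * L)) + ε / 2 := add_le_add hterm1 hterm2
    _ ≤ ε / 2 + ε / 2 := by
        have := le_of_lt (hT₂ T hTT₂)
        linarith
    _ = ε := by ring
end

section
/- Let Y and U be real Hilbert spaces, A : Y → Y and C : Y → U bounded linear operators, t_c > 0 and α > 0, and assume the observability inequality ∫_0^{t_c} ‖C(exp(s·A) y)‖_U² ds ≥ α ‖y‖_Y² holds for all y ∈ Y. Then there exists a constant c > 0 (depending only on α, t_c, ‖C‖ and sup_{s∈[0,t_c]} ‖exp(s·A)‖, and in particular independent of t, λ and w) such that for every t ≥ t_c, every continuous w : ℝ → Y, and every differentiable λ : ℝ → Y satisfying λ′(s) = −A λ(s) + w(s) for all s ∈ [t − t_c, t], one has ‖λ(t)‖_Y² ≤ c ∫_{t−t_c}^t ( ‖C(λ(s))‖_U² + ‖w(s)‖_Y² ) ds. -/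
open MeasureTheory intervalIntegral

lemma sq_intervalIntegral_le {f : ℝ → ℝ} (hf : Continuous f) (hfn : ∀ x, 0 ≤ f x)
    {a b : ℝ} (hab : a ≤ b) :
    (∫ x in a..b, f x) ^ 2 ≤ (b - a) * ∫ x in a..b, f x ^ 2 := by
  rw [intervalIntegral.integral_of_le hab, intervalIntegral.integral_of_le hab]
  set μ := volume.restrict (Set.Ioc a b) with hμ
  have hfin : IsFiniteMeasure μ := by
    constructor
    rw [hμ, Measure.restrict_apply_univ, Real.volume_Ioc]
    exact ENNReal.ofReal_lt_top
  obtain ⟨Cb, hCb⟩ : ∃ Cb : ℝ, ∀ x ∈ Set.Icc a b, ‖f x‖ ≤ Cb :=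
    isCompact_Icc.exists_bound_of_continuousOn hf.continuousOn
  have hmem : MemLp f (ENNReal.ofReal 2) μ := by
    refine MemLp.of_bound hf.aestronglyMeasurable Cb ?_
    refine (ae_restrict_iff' measurableSet_Ioc).2 (ae_of_all _ fun x hx => ?_)
    exact hCb x ⟨le_of_lt hx.1, hx.2⟩
  have hone : MemLp (fun _ : ℝ => (1:ℝ)) (ENNReal.ofReal 2) μ := memLp_const 1
  have hpq : Real.HolderConjugate 2 2 := Real.HolderConjugate.two_two
  have h := integral_mul_le_Lp_mul_Lq_of_nonneg hpq (μ := μ)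
    (ae_of_all _ hfn) (ae_of_all _ fun _ => zero_le_one) hmem hone
  simp only [mul_one] at h
  have h1 : ∫ x, (1:ℝ) ^ (2:ℝ) ∂μ = b - a := by
    simp [hμ, Real.volume_Ioc, ENNReal.toReal_ofReal (by linarith : (0:ℝ) ≤ b - a), hab]
  rw [h1] at h
  have hrw : ∀ x, f x ^ (2:ℝ) = f x ^ 2 := fun x => by
    rw [show (2:ℝ) = ((2:ℕ):ℝ) by norm_num, Real.rpow_natCast]
  simp only [hrw] at h
  have hI : 0 ≤ ∫ x, f x ^ 2 ∂μ := integral_nonneg fun x => sq_nonneg _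
  have hInt : 0 ≤ ∫ x, f x ∂μ := integral_nonneg hfn
  calc (∫ x, f x ∂μ) ^ 2 ≤ ((∫ x, f x ^ 2 ∂μ) ^ ((1:ℝ)/2) * (b - a) ^ ((1:ℝ)/2)) ^ 2 := by
        exact pow_le_pow_left₀ hInt h 2
    _ = (b - a) * ∫ x, f x ^ 2 ∂μ := by
        rw [mul_pow, ← Real.rpow_natCast ((∫ x, f x ^ 2 ∂μ) ^ ((1:ℝ)/2)) 2,
          ← Real.rpow_natCast ((b - a) ^ ((1:ℝ)/2)) 2,
          ← Real.rpow_mul hI, ← Real.rpow_mul (by linarith : (0:ℝ) ≤ b - a)]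
        norm_num
        ring

/-- (Adjoint bound under observability.) If the observability
inequality `∫_0^{t_c} ‖C exp(sA) y‖² ds ≥ α ‖y‖²` holds for all `y ∈ Y`, then there
is `c > 0` such that every differentiable `λ` with `λ′(s) = −Aλ(s) + w(s)` on
`[t − t_c, t]` (with `w` continuous, `t ≥ t_c`) satisfies
`‖λ(t)‖² ≤ c ∫_{t−t_c}^t (‖C λ(s)‖² + ‖w(s)‖²) ds`. -/
theorem adjoint_bound_of_observability
    {Y U : Type*} [NormedAddCommGroup Y] [InnerProductSpace ℝ Y] [CompleteSpace Y]
    [NormedAddCommGroup U] [InnerProductSpace ℝ U] [CompleteSpace U]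
    (A : Y →L[ℝ] Y) (C : Y →L[ℝ] U) (tc α : ℝ) (htc : 0 < tc) (hα : 0 < α)
    (hobs : ∀ y : Y,
      α * ‖y‖ ^ 2 ≤ ∫ s in (0:ℝ)..tc, ‖C ((NormedSpace.exp (s • A)) y)‖ ^ 2) :
    ∃ c > (0 : ℝ), ∀ t : ℝ, tc ≤ t → ∀ w : ℝ → Y, Continuous w →
      ∀ lam : ℝ → Y,
        (∀ s ∈ Set.Icc (t - tc) t, HasDerivAt lam (-(A (lam s)) + w s) s) →
        ‖lam t‖ ^ 2 ≤ c * ∫ s in (t - tc)..t, (‖C (lam s)‖ ^ 2 + ‖w s‖ ^ 2) := by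
  classical
  set E' : ℝ → Y →L[ℝ] Y := fun s => NormedSpace.exp (s • A) with hE'def
  set E : ℝ → Y →L[ℝ] Y := fun s => NormedSpace.exp (s • (-A)) with hEdef
  have hE'cont : Continuous E' :=
    continuous_iff_continuousAt.2 fun s =>
      (hasDerivAt_exp_smul_const (𝕂 := ℝ) A s).continuousAt
  have hEcont : Continuous E :=
    continuous_iff_continuousAt.2 fun s =>
      (hasDerivAt_exp_smul_const (𝕂 := ℝ) (-A) s).continuousAt
  -- a common bound on the semigroup norms
  obtain ⟨M0, hM0⟩ : ∃ M0 : ℝ, ∀ s ∈ Set.Icc (0:ℝ) tc, ‖(E' s, E s)‖ ≤ M0 :=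
    isCompact_Icc.exists_bound_of_continuousOn (hE'cont.prodMk hEcont).continuousOn
  set M : ℝ := max M0 1 with hMdef
  have hM1 : (1:ℝ) ≤ M := le_max_right _ _
  have hMpos : (0:ℝ) < M := lt_of_lt_of_le one_pos hM1
  have hME' : ∀ s ∈ Set.Icc (0:ℝ) tc, ‖E' s‖ ≤ M := fun s hs =>
    le_trans (le_trans (le_max_left _ _) (hM0 s hs)) (le_max_left _ _)
  have hME : ∀ s ∈ Set.Icc (0:ℝ) tc, ‖E s‖ ≤ M := fun s hs =>
    le_trans (le_trans (le_max_right ‖E' s‖ ‖E s‖) (hM0 s hs)) (le_max_left _ _)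
  set K : ℝ := 2 + 2 * tc ^ 2 * ‖C‖ ^ 2 * M ^ 4 with hKdef
  have hK2 : (2:ℝ) ≤ K := by
    have : 0 ≤ 2 * tc ^ 2 * ‖C‖ ^ 2 * M ^ 4 := by positivity
    linarith
  refine ⟨K / α, by positivity, ?_⟩
  intro t ht w hw lam hlam
  set a : ℝ := t - tc with hadef
  have hat : a ≤ t := by simp [hadef]; linarith
  -- E' s * E s = 1
  have hEmul : ∀ s : ℝ, (E' s) * (E s) = 1 := by
    intro s
    have hc : Commute (s • A) (s • (-A)) := by
      rw [smul_neg]; exact (Commute.refl _).neg_right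
    rw [hE'def, hEdef, ← NormedSpace.exp_add_of_commute_of_mem_ball (𝕂 := ℝ) hc
      ((NormedSpace.expSeries_radius_eq_top ℝ (Y →L[ℝ] Y)).symm ▸ edist_lt_top _ _)
      ((NormedSpace.expSeries_radius_eq_top ℝ (Y →L[ℝ] Y)).symm ▸ edist_lt_top _ _)]
    simp [smul_neg]
  -- continuity of lam on [a,t]
  have hlamc : ContinuousOn lam (Set.Icc a t) := fun s hs =>
    ((hlam s hs).continuousAt).continuousWithinAt
  -- derivative of ψ s = E s (lam (t - s))
  have hψ : ∀ s ∈ Set.Icc (0:ℝ) tc,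
      HasDerivAt (fun u => E u (lam (t - u))) (-(E s (w (t - s)))) s := by
    intro s hs
    have hts : t - s ∈ Set.Icc a t := by
      constructor
      · simp [hadef]; linarith [hs.2]
      · linarith [hs.1]
    have hg : HasDerivAt (fun u : ℝ => t - u) (-1) s := by
      simpa using (hasDerivAt_id s).const_sub t
    have h1 : HasDerivAt (fun u : ℝ => lam (t - u))
        ((-1 : ℝ) • (-(A (lam (t - s))) + w (t - s))) s :=
      (hlam _ hts).scomp s hg
    have h2 : HasDerivAt E (E s * (-A)) s := hasDerivAt_exp_smul_const (-A) s
    have h3 := h2.clm_apply h1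
    convert h3 using 1
    simp only [ContinuousLinearMap.mul_apply, ContinuousLinearMap.neg_apply,
      neg_smul, one_smul, map_add, map_neg]
    abel
  -- continuity of the inhomogeneity
  have hFcont : Continuous (fun σ : ℝ => E σ (w (t - σ))) :=
    hEcont.clm_apply (hw.comp (continuous_const.sub continuous_id))
  -- Duhamel
  have key : ∀ s ∈ Set.Icc (0:ℝ) tc,
      E s (lam (t - s)) = lam t - ∫ σ in (0:ℝ)..s, E σ (w (t - σ)) := by
    intro s hs
    have hsub : Set.uIcc (0:ℝ) s ⊆ Set.Icc (0:ℝ) tc := by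
      rw [Set.uIcc_of_le hs.1]
      exact Set.Icc_subset_Icc le_rfl hs.2
    have hftc := intervalIntegral.integral_eq_sub_of_hasDerivAt
      (f := fun u => E u (lam (t - u))) (f' := fun u => -(E u (w (t - u))))
      (fun σ hσ => hψ σ (hsub hσ)) ((hFcont.neg).intervalIntegrable 0 s)
    rw [intervalIntegral.integral_neg] at hftc
    have hE0 : E 0 (lam (t - 0)) = lam t := by
      simp [hEdef, NormedSpace.exp_zero]
    rw [hE0] at hftc
    have h4 : E s (lam (t - s)) - lam t = -∫ σ in (0:ℝ)..s, E σ (w (t - σ)) :=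
      hftc.symm
    rw [sub_eq_iff_eq_add] at h4
    rw [h4]; abel
  -- main identity
  have hid : ∀ s ∈ Set.Icc (0:ℝ) tc,
      E' s (lam t) = lam (t - s) + E' s (∫ σ in (0:ℝ)..s, E σ (w (t - σ))) := by
    intro s hs
    have h2 : E' s (E s (lam (t - s))) = lam (t - s) := by
      have := congrArg (fun (T : Y →L[ℝ] Y) => T (lam (t - s))) (hEmul s)
      simpa [ContinuousLinearMap.mul_apply] using this
    rw [key s hs, map_sub] at h2
    exact eq_add_of_sub_eq h2
  -- bound on perturbation term
  set W : ℝ := ∫ σ in (0:ℝ)..tc, ‖w (t - σ)‖ with hWdef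
  have hW0 : 0 ≤ W :=
    intervalIntegral.integral_nonneg htc.le (fun x _ => norm_nonneg _)
  have hR : ∀ s ∈ Set.Icc (0:ℝ) tc,
      ‖E' s (∫ σ in (0:ℝ)..s, E σ (w (t - σ)))‖ ≤ M ^ 2 * W := by
    intro s hs
    have h1 : ‖∫ σ in (0:ℝ)..s, E σ (w (t - σ))‖ ≤ M * W := by
      calc ‖∫ σ in (0:ℝ)..s, E σ (w (t - σ))‖
          ≤ ∫ σ in (0:ℝ)..s, ‖E σ (w (t - σ))‖ :=
            intervalIntegral.norm_integral_le_integral_norm hs.1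
        _ ≤ ∫ σ in (0:ℝ)..s, M * ‖w (t - σ)‖ := by
            apply intervalIntegral.integral_mono_on hs.1
            · exact (hFcont.norm).intervalIntegrable _ _
            · exact (continuous_const.mul ((hw.comp
                (continuous_const.sub continuous_id)).norm)).intervalIntegrable _ _
            · intro x hx
              calc ‖E x (w (t - x))‖ ≤ ‖E x‖ * ‖w (t - x)‖ :=
                    (E x).le_opNorm _
                _ ≤ M * ‖w (t - x)‖ := by
                    apply mul_le_mul_of_nonneg_right _ (norm_nonneg _)
                    exact hME x ⟨hx.1, hx.2.trans hs.2⟩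
        _ ≤ ∫ σ in (0:ℝ)..tc, M * ‖w (t - σ)‖ := by
            apply intervalIntegral.integral_mono_interval le_rfl hs.1 hs.2
            · exact ae_of_all _ fun x => by positivity
            · exact (continuous_const.mul ((hw.comp
                (continuous_const.sub continuous_id)).norm)).intervalIntegrable _ _
        _ = M * W := by rw [hWdef, intervalIntegral.integral_const_mul]
    calc ‖E' s (∫ σ in (0:ℝ)..s, E σ (w (t - σ)))‖
        ≤ ‖E' s‖ * ‖∫ σ in (0:ℝ)..s, E σ (w (t - σ))‖ := (E' s).le_opNorm _
      _ ≤ M * (M * W) := by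
          apply mul_le_mul (hME' s hs) h1 (norm_nonneg _) hMpos.le
      _ = M ^ 2 * W := by ring
  -- pointwise bound
  have hpt : ∀ s ∈ Set.Icc (0:ℝ) tc,
      ‖C (E' s (lam t))‖ ^ 2 ≤
        2 * ‖C (lam (t - s))‖ ^ 2 + 2 * (‖C‖ * (M ^ 2 * W)) ^ 2 := by
    intro s hs
    have h1 : ‖C (E' s (lam t))‖ ≤ ‖C (lam (t - s))‖ + ‖C‖ * (M ^ 2 * W) := by
      rw [hid s hs, map_add]
      calc ‖C (lam (t - s)) + C (E' s (∫ σ in (0:ℝ)..s, E σ (w (t - σ))))‖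
          ≤ ‖C (lam (t - s))‖ + ‖C (E' s (∫ σ in (0:ℝ)..s, E σ (w (t - σ))))‖ :=
            norm_add_le _ _
        _ ≤ ‖C (lam (t - s))‖ + ‖C‖ * (M ^ 2 * W) := by
            apply add_le_add_right
            calc ‖C (E' s (∫ σ in (0:ℝ)..s, E σ (w (t - σ))))‖
                ≤ ‖C‖ * ‖E' s (∫ σ in (0:ℝ)..s, E σ (w (t - σ)))‖ := C.le_opNorm _
              _ ≤ ‖C‖ * (M ^ 2 * W) :=
                  mul_le_mul_of_nonneg_left (hR s hs) (norm_nonneg _)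
    have h2 := mul_self_le_mul_self (norm_nonneg (C (E' s (lam t)))) h1
    nlinarith [sq_nonneg (‖C (lam (t - s))‖ - ‖C‖ * (M ^ 2 * W))]
  -- integrability facts
  have hlamcomp : ContinuousOn (fun s : ℝ => lam (t - s)) (Set.Icc 0 tc) := by
    apply hlamc.comp (continuous_const.sub continuous_id).continuousOn
    intro x hx
    constructor
    · simp only [hadef]; simp only [Set.mem_Icc] at hx; simp; linarith [hx.2]
    · simp only [Set.mem_Icc] at hx; simp; linarith [hx.1]
  have hClamcont : ContinuousOn (fun s : ℝ => ‖C (lam (t - s))‖ ^ 2) (Set.Icc 0 tc) :=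
    ((C.continuous.comp_continuousOn hlamcomp).norm).pow 2
  have hCint : IntervalIntegrable (fun s => ‖C (lam (t - s))‖ ^ 2) volume 0 tc := by
    apply ContinuousOn.intervalIntegrable
    rwa [Set.uIcc_of_le htc.le]
  have hLHScont : Continuous (fun s : ℝ => ‖C (E' s (lam t))‖ ^ 2) :=
    ((C.continuous.comp (hE'cont.clm_apply continuous_const)).norm).pow 2
  -- integrate the pointwise bound
  have h5 : (∫ s in (0:ℝ)..tc, ‖C (E' s (lam t))‖ ^ 2) ≤
      ∫ s in (0:ℝ)..tc, (2 * ‖C (lam (t - s))‖ ^ 2 + 2 * (‖C‖ * (M ^ 2 * W)) ^ 2) := by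
    apply intervalIntegral.integral_mono_on htc.le
      (hLHScont.intervalIntegrable _ _)
      (((hCint.const_mul 2).add (intervalIntegrable_const)))
      hpt
  have h6 : (∫ s in (0:ℝ)..tc, (2 * ‖C (lam (t - s))‖ ^ 2 + 2 * (‖C‖ * (M ^ 2 * W)) ^ 2))
      = 2 * (∫ s in (0:ℝ)..tc, ‖C (lam (t - s))‖ ^ 2) + tc * (2 * (‖C‖ * (M ^ 2 * W)) ^ 2) := by
    rw [intervalIntegral.integral_add (hCint.const_mul 2) intervalIntegrable_const,
      intervalIntegral.integral_const_mul, intervalIntegral.integral_const]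
    simp [smul_eq_mul]
  -- change of variables
  have hcv1 : (∫ s in (0:ℝ)..tc, ‖C (lam (t - s))‖ ^ 2)
      = ∫ σ in a..t, ‖C (lam σ)‖ ^ 2 := by
    have := intervalIntegral.integral_comp_sub_left (a := (0:ℝ)) (b := tc)
      (fun σ => ‖C (lam σ)‖ ^ 2) t
    simpa [hadef] using this
  have hcv2 : (∫ σ in (0:ℝ)..tc, ‖w (t - σ)‖ ^ 2) = ∫ σ in a..t, ‖w σ‖ ^ 2 := by
    have := intervalIntegral.integral_comp_sub_left (a := (0:ℝ)) (b := tc)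
      (fun σ => ‖w σ‖ ^ 2) t
    simpa [hadef] using this
  -- Cauchy-Schwarz for W
  have hCS : W ^ 2 ≤ tc * ∫ σ in (0:ℝ)..tc, ‖w (t - σ)‖ ^ 2 := by
    have := sq_intervalIntegral_le (f := fun σ => ‖w (t - σ)‖)
      ((hw.comp (continuous_const.sub continuous_id)).norm)
      (fun x => norm_nonneg _) htc.le
    simpa using this
  -- observability
  have hobs' : α * ‖lam t‖ ^ 2 ≤ ∫ s in (0:ℝ)..tc, ‖C (E' s (lam t))‖ ^ 2 := hobs (lam t)
  set IC : ℝ := ∫ σ in a..t, ‖C (lam σ)‖ ^ 2 with hICdef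
  set Iw : ℝ := ∫ σ in a..t, ‖w σ‖ ^ 2 with hIwdef
  have hIC0 : 0 ≤ IC := intervalIntegral.integral_nonneg hat (fun x _ => sq_nonneg _)
  have hIw0 : 0 ≤ Iw := intervalIntegral.integral_nonneg hat (fun x _ => sq_nonneg _)
  have hmain : α * ‖lam t‖ ^ 2 ≤ K * (IC + Iw) := by
    have h7 : α * ‖lam t‖ ^ 2 ≤ 2 * IC + tc * (2 * (‖C‖ * (M ^ 2 * W)) ^ 2) := by
      calc α * ‖lam t‖ ^ 2 ≤ ∫ s in (0:ℝ)..tc, ‖C (E' s (lam t))‖ ^ 2 := hobs'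
        _ ≤ ∫ s in (0:ℝ)..tc, (2 * ‖C (lam (t - s))‖ ^ 2 + 2 * (‖C‖ * (M ^ 2 * W)) ^ 2) := h5
        _ = 2 * IC + tc * (2 * (‖C‖ * (M ^ 2 * W)) ^ 2) := by rw [h6, hcv1]
    have h8 : tc * (2 * (‖C‖ * (M ^ 2 * W)) ^ 2) = 2 * tc * ‖C‖ ^ 2 * M ^ 4 * W ^ 2 := by
      ring
    have h9 : 2 * tc * ‖C‖ ^ 2 * M ^ 4 * W ^ 2 ≤ 2 * tc ^ 2 * ‖C‖ ^ 2 * M ^ 4 * Iw := by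
      have hW2 : W ^ 2 ≤ tc * Iw := by rw [← hcv2]; exact hCS
      have hco : (0:ℝ) ≤ 2 * tc * ‖C‖ ^ 2 * M ^ 4 := by positivity
      calc 2 * tc * ‖C‖ ^ 2 * M ^ 4 * W ^ 2
          ≤ 2 * tc * ‖C‖ ^ 2 * M ^ 4 * (tc * Iw) := by
            exact mul_le_mul_of_nonneg_left hW2 hco
        _ = 2 * tc ^ 2 * ‖C‖ ^ 2 * M ^ 4 * Iw := by ring
    have hK3 : 2 * tc ^ 2 * ‖C‖ ^ 2 * M ^ 4 ≤ K := by
      rw [hKdef]; linarith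
    have h10 := mul_le_mul_of_nonneg_right hK3 hIw0
    have h11 := mul_le_mul_of_nonneg_right hK2 hIC0
    have h12 : K * (IC + Iw) = K * IC + K * Iw := by ring
    linarith
  -- conclude
  have hsum : (∫ s in a..t, (‖C (lam s)‖ ^ 2 + ‖w s‖ ^ 2)) = IC + Iw := by
    rw [hICdef, hIwdef]
    apply intervalIntegral.integral_add
    · apply ContinuousOn.intervalIntegrable
      rw [Set.uIcc_of_le hat]
      exact ((C.continuous.comp_continuousOn hlamc).norm).pow 2
    · exact (hw.norm.pow 2).intervalIntegrable _ _
  rw [hsum, div_mul_eq_mul_div, le_div_iff₀ hα]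
  have hmain' := hmain
  rw [mul_comm] at hmain'
  linarith
end

section
/- Let Y, A, C, t_c, α be as in the observability setting: Y and U real Hilbert spaces, A : Y → Y and C : Y → U bounded linear operators, t_c > 0, α > 0, and ∫_0^{t_c} ‖C(exp(s·A) y)‖_U² ds ≥ α ‖y‖_Y² for all y ∈ Y. Let t₁, t₂ : ℝ_{≥0} → ℝ_{≥0} satisfy t₁(T) ≤ t₂(T) ≤ T and t₂(T) − t₁(T) → ∞ as T → ∞. For each T > 0 let λ_T : ℝ → Y be differentiable, p_T : ℝ → L(Y,Y), m_T : ℝ → L(Y,U) and q_T : ℝ → Y, n_T : ℝ → U be continuous, such that on [t₁(T), t₂(T)]: λ_T′(s) = −A λ_T(s) − p_T(s)(λ_T(s)) + q_T(s) and 0 = C(λ_T(s)) + m_T(s)(λ_T(s)) + n_T(s). Assume sup_{T} sup_{t ∈ [t₁(T),t₂(T)]} ‖λ_T(t)‖_Y < ∞ and that the suprema over [t₁(T), t₂(T)] of ‖p_T(s)‖, ‖q_T(s)‖_Y, ‖m_T(s)‖ and ‖n_T(s)‖_U all tend to 0 as T → ∞. Then for every ε > 0 there exists T₀ > 0 such that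 for all T ≥ T₀ and all t ∈ [t₁(T) + t_c, t₂(T)], ‖λ_T(t)‖_Y ≤ ε. -/
open MeasureTheory intervalIntegral Filter

open NormedSpace

set_option maxHeartbeats 1000000 in
set_option synthInstance.maxHeartbeats 200000 in
/-- (Interval turnpike for adjoints under exact controllability,
bounded-generator form.) Under the observability inequality for `(A, C)` with
constants `α, t_c`, uniformly bounded adjoint trajectories of the perturbed
extremal equations with uniformly vanishing remainder terms become uniformly
small on `[t₁(T) + t_c, t₂(T)]` as `T → ∞`. -/
theorem adjoint_interval_turnpike_of_observability
    {Y U : Type*} [NormedAddCommGroup Y] [InnerProductSpace ℝ Y] [CompleteSpace Y]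
    [NormedAddCommGroup U] [InnerProductSpace ℝ U] [CompleteSpace U]
    (A : Y →L[ℝ] Y) (C : Y →L[ℝ] U) (tc α : ℝ) (htc : 0 < tc) (hα : 0 < α)
    (hobs : ∀ y : Y,
      α * ‖y‖ ^ 2 ≤ ∫ s in (0:ℝ)..tc, ‖C ((NormedSpace.exp (s • A)) y)‖ ^ 2)
    (t₁ t₂ : ℝ → ℝ) (ht₁ : ∀ T, 0 ≤ t₁ T) (ht₁₂ : ∀ T, t₁ T ≤ t₂ T)
    (ht₂ : ∀ T, t₂ T ≤ T)
    (hgrow : Tendsto (fun T => t₂ T - t₁ T) atTop atTop)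
    (lam : ℝ → ℝ → Y)
    (hdiff : ∀ T > (0 : ℝ), Differentiable ℝ (lam T))
    (p : ℝ → ℝ → (Y →L[ℝ] Y)) (m : ℝ → ℝ → (Y →L[ℝ] U))
    (q : ℝ → ℝ → Y) (nn : ℝ → ℝ → U)
    (hp : ∀ T > (0 : ℝ), Continuous (p T)) (hm : ∀ T > (0 : ℝ), Continuous (m T))
    (hq : ∀ T > (0 : ℝ), Continuous (q T)) (hn : ∀ T > (0 : ℝ), Continuous (nn T))
    (hode : ∀ T > (0 : ℝ), ∀ s ∈ Set.Icc (t₁ T) (t₂ T),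
      HasDerivAt (lam T) (-(A (lam T s)) - (p T s) (lam T s) + q T s) s)
    (halg : ∀ T > (0 : ℝ), ∀ s ∈ Set.Icc (t₁ T) (t₂ T),
      (0 : U) = C (lam T s) + (m T s) (lam T s) + nn T s)
    (hbdd : ∃ B : ℝ, ∀ T > (0 : ℝ), ∀ t ∈ Set.Icc (t₁ T) (t₂ T), ‖lam T t‖ ≤ B)
    (hres : ∀ ε > (0 : ℝ), ∃ T₀ > (0 : ℝ), ∀ T ≥ T₀,
      ∀ s ∈ Set.Icc (t₁ T) (t₂ T),
        ‖p T s‖ ≤ ε ∧ ‖q T s‖ ≤ ε ∧ ‖m T s‖ ≤ ε ∧ ‖nn T s‖ ≤ ε) :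
    ∀ ε > (0 : ℝ), ∃ T₀ > (0 : ℝ), ∀ T ≥ T₀,
      ∀ t ∈ Set.Icc (t₁ T + tc) (t₂ T), ‖lam T t‖ ≤ ε := by
  intro ε hε
  let +nondep : NormedAlgebra ℚ (Y →L[ℝ] Y) := .restrictScalars ℚ ℝ _
  obtain ⟨B₀, hB₀⟩ := hbdd
  set B : ℝ := max B₀ 0 with hBdef
  have hB : ∀ T > (0:ℝ), ∀ t ∈ Set.Icc (t₁ T) (t₂ T), ‖lam T t‖ ≤ B :=
    fun T hT t ht => (hB₀ T hT t ht).trans (le_max_left _ _)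
  have hBnn : (0:ℝ) ≤ B := le_max_right _ _
  obtain ⟨M₀, hM₀⟩ : ∃ M, ∀ s ∈ Set.Icc (-tc) tc, ‖NormedSpace.exp (s • A)‖ ≤ M := by
    apply isCompact_Icc.exists_bound_of_continuousOn
    exact (NormedSpace.exp_continuous.comp (continuous_id.smul continuous_const)).continuousOn
  set M : ℝ := max M₀ 1 with hMdef
  have hM : ∀ s ∈ Set.Icc (-tc) tc, ‖NormedSpace.exp (s • A)‖ ≤ M :=
    fun s hs => (hM₀ s hs).trans (le_max_left _ _)
  have hM1 : (1:ℝ) ≤ M := le_max_right _ _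
  have hM0 : (0:ℝ) < M := lt_of_lt_of_le one_pos hM1
  set D : ℝ := (1 + ‖C‖ * M ^ 2 * tc) * (B + 1) with hDdef
  have hD0 : (0:ℝ) < D := by positivity
  set δ : ℝ := min 1 (α * ε ^ 2 / (tc * D ^ 2)) with hδdef
  have hδ0 : (0:ℝ) < δ := lt_min one_pos (by positivity)
  have hδ1 : δ ≤ 1 := min_le_left _ _
  have hδ2 : tc * D ^ 2 * δ ≤ α * ε ^ 2 := by
    have h := min_le_right 1 (α * ε ^ 2 / (tc * D ^ 2))
    calc tc * D ^ 2 * δ ≤ tc * D ^ 2 * (α * ε ^ 2 / (tc * D ^ 2)) :=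
          mul_le_mul_of_nonneg_left h (by positivity)
      _ = α * ε ^ 2 := by field_simp
  obtain ⟨T₀, hT₀, hsmall⟩ := hres δ hδ0
  refine ⟨T₀, hT₀, fun T hT t ht => ?_⟩
  have hTpos : (0:ℝ) < T := lt_of_lt_of_le hT₀ hT
  have hmem : ∀ s ∈ Set.Icc (0:ℝ) tc, t - s ∈ Set.Icc (t₁ T) (t₂ T) := by
    intro s hs
    exact ⟨by linarith [ht.1, hs.2], by linarith [ht.2, hs.1]⟩
  set y : Y := lam T t with hy
  -- pointwise bound on the observed quantity
  have key : ∀ s ∈ Set.Icc (0:ℝ) tc, ‖C (NormedSpace.exp (s • A) y)‖ ≤ D * δ := by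
    intro s hs
    set g : ℝ → Y := fun u => NormedSpace.exp ((-u) • A) (lam T (t - u)) with hgdef
    set g' : ℝ → Y := fun u =>
      NormedSpace.exp ((-u) • A) ((p T (t - u)) (lam T (t - u)) - q T (t - u)) with hg'def
    have hg : ∀ u ∈ Set.Icc (0:ℝ) tc, HasDerivAt g (g' u) u := by
      intro u hu
      have hE : HasDerivAt (fun u : ℝ => NormedSpace.exp ((-u) • A))
          (-(NormedSpace.exp ((-u) • A) * A)) u := by
        have h1 := hasDerivAt_exp_smul_const (𝕂 := ℝ) A (-u)
        have h2 : HasDerivAt (fun u : ℝ => -u) (-1 : ℝ) u := hasDerivAt_neg u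
        have h3 : HasDerivAt (fun u : ℝ => NormedSpace.exp ((-u) • A))
            ((-1 : ℝ) • (NormedSpace.exp ((-u) • A) * A)) u := h1.scomp u h2
        simpa [neg_one_smul] using h3
      have hL := hode T hTpos (t - u) (hmem u hu)
      have h4 : HasDerivAt (fun u : ℝ => t - u) (-1 : ℝ) u := (hasDerivAt_id u).const_sub t
      have hv : HasDerivAt (fun u : ℝ => lam T (t - u))
          ((-1 : ℝ) • (-(A (lam T (t - u))) - (p T (t - u)) (lam T (t - u)) + q T (t - u))) u :=
        hL.scomp u h4
      have h5 := hE.clm_apply hv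
      convert h5 using 1
      simp only [hg'def, ContinuousLinearMap.neg_apply, ContinuousLinearMap.mul_apply,
        neg_one_smul, map_sub, map_add, map_neg]
      abel
    have hbound : ∀ u ∈ Set.Icc (0:ℝ) tc, ‖g' u‖ ≤ M * (δ * (B + 1)) := by
      intro u hu
      have hmem' := hmem u hu
      have h := hsmall T hT (t - u) hmem'
      have hEn : ‖NormedSpace.exp ((-u) • A)‖ ≤ M :=
        hM (-u) ⟨by linarith [hu.2], by linarith [hu.1, htc]⟩
      have h1 : ‖(p T (t - u)) (lam T (t - u))‖ ≤ δ * B :=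
        ((p T (t - u)).le_opNorm _).trans
          (mul_le_mul h.1 (hB T hTpos _ hmem') (norm_nonneg _) hδ0.le)
      have h2 : ‖(p T (t - u)) (lam T (t - u)) - q T (t - u)‖ ≤ δ * (B + 1) := by
        calc ‖(p T (t - u)) (lam T (t - u)) - q T (t - u)‖
            ≤ ‖(p T (t - u)) (lam T (t - u))‖ + ‖q T (t - u)‖ := norm_sub_le _ _
          _ ≤ δ * B + δ := add_le_add h1 h.2.1
          _ = δ * (B + 1) := by ring
      calc ‖g' u‖ ≤ ‖NormedSpace.exp ((-u) • A)‖ *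
            ‖(p T (t - u)) (lam T (t - u)) - q T (t - u)‖ :=
            (NormedSpace.exp ((-u) • A)).le_opNorm _
        _ ≤ M * (δ * (B + 1)) :=
            mul_le_mul hEn h2 (norm_nonneg _) hM0.le
    have hmvt : ‖g s - g 0‖ ≤ M * (δ * (B + 1)) * ‖s - 0‖ :=
      (convex_Icc (0:ℝ) tc).norm_image_sub_le_of_norm_hasDerivWithin_le
        (fun u hu => (hg u hu).hasDerivWithinAt) hbound (Set.left_mem_Icc.2 htc.le) hs
    have hg0 : g 0 = y := by
      simp [hgdef, NormedSpace.exp_zero, hy]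
    have hinv : NormedSpace.exp (s • A) * NormedSpace.exp ((-s) • A) = 1 := by
      rw [← NormedSpace.exp_add_of_commute]
      · rw [show s • A + (-s) • A = 0 by rw [← add_smul]; simp]
        exact NormedSpace.exp_zero
      · exact ((Commute.refl A).smul_left s).smul_right (-s)
    have hEg : NormedSpace.exp (s • A) (g s) = lam T (t - s) := by
      have : NormedSpace.exp (s • A) (g s) =
          (NormedSpace.exp (s • A) * NormedSpace.exp ((-s) • A)) (lam T (t - s)) := rfl
      rw [this, hinv, ContinuousLinearMap.one_apply]
    have hdist : ‖NormedSpace.exp (s • A) y - lam T (t - s)‖ ≤ M ^ 2 * tc * (δ * (B + 1)) := by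
      have heq : NormedSpace.exp (s • A) y - lam T (t - s) =
          NormedSpace.exp (s • A) (g 0 - g s) := by
        rw [map_sub, hEg, hg0]
      rw [heq]
      have hEn : ‖NormedSpace.exp (s • A)‖ ≤ M := hM s ⟨by linarith [hs.1, htc], hs.2⟩
      have hgs : ‖g 0 - g s‖ ≤ M * (δ * (B + 1)) * tc := by
        rw [norm_sub_rev]
        refine hmvt.trans ?_
        have : ‖s - 0‖ ≤ tc := by
          rw [sub_zero, Real.norm_eq_abs, abs_of_nonneg hs.1]; exact hs.2
        exact mul_le_mul_of_nonneg_left this (by positivity)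
      calc ‖NormedSpace.exp (s • A) (g 0 - g s)‖
          ≤ ‖NormedSpace.exp (s • A)‖ * ‖g 0 - g s‖ :=
          (NormedSpace.exp (s • A)).le_opNorm _
        _ ≤ M * (M * (δ * (B + 1)) * tc) :=
          mul_le_mul hEn hgs (norm_nonneg _) hM0.le
        _ = M ^ 2 * tc * (δ * (B + 1)) := by ring
    have hCL : ‖C (lam T (t - s))‖ ≤ δ * (B + 1) := by
      have h0 := halg T hTpos (t - s) (hmem s hs)
      have h1 : C (lam T (t - s)) + ((m T (t - s)) (lam T (t - s)) + nn T (t - s)) = 0 := by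
        rw [← add_assoc]; exact h0.symm
      have h2 : C (lam T (t - s)) = -((m T (t - s)) (lam T (t - s)) + nn T (t - s)) :=
        eq_neg_of_add_eq_zero_left h1
      rw [h2, norm_neg]
      have h := hsmall T hT (t - s) (hmem s hs)
      have h3 : ‖(m T (t - s)) (lam T (t - s))‖ ≤ δ * B :=
        ((m T (t - s)).le_opNorm _).trans
          (mul_le_mul h.2.2.1 (hB T hTpos _ (hmem s hs)) (norm_nonneg _) hδ0.le)
      calc ‖(m T (t - s)) (lam T (t - s)) + nn T (t - s)‖
          ≤ ‖(m T (t - s)) (lam T (t - s))‖ + ‖nn T (t - s)‖ := norm_add_le _ _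
        _ ≤ δ * B + δ := add_le_add h3 h.2.2.2
        _ = δ * (B + 1) := by ring
    calc ‖C (NormedSpace.exp (s • A) y)‖
        = ‖C (NormedSpace.exp (s • A) y - lam T (t - s)) + C (lam T (t - s))‖ := by
          rw [map_sub, sub_add_cancel]
      _ ≤ ‖C (NormedSpace.exp (s • A) y - lam T (t - s))‖ + ‖C (lam T (t - s))‖ :=
          norm_add_le _ _
      _ ≤ ‖C‖ * (M ^ 2 * tc * (δ * (B + 1))) + δ * (B + 1) :=
          add_le_add ((C.le_opNorm _).trans
            (mul_le_mul_of_nonneg_left hdist (norm_nonneg C))) hCL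
      _ = D * δ := by rw [hDdef]; ring
  -- integrate the pointwise bound
  have hcont : Continuous fun s : ℝ => ‖C (NormedSpace.exp (s • A) y)‖ ^ 2 := by
    have h1 : Continuous fun s : ℝ => NormedSpace.exp (s • A) :=
      NormedSpace.exp_continuous.comp (continuous_id.smul continuous_const)
    have h2 : Continuous fun s : ℝ => NormedSpace.exp (s • A) y :=
      h1.clm_apply continuous_const
    exact ((C.continuous.comp h2).norm).pow 2
  have hint : IntervalIntegrable (fun s : ℝ => ‖C (NormedSpace.exp (s • A) y)‖ ^ 2)
      volume 0 tc := hcont.intervalIntegrable _ _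
  have hmono : (∫ s in (0:ℝ)..tc, ‖C (NormedSpace.exp (s • A) y)‖ ^ 2) ≤
      ∫ _s in (0:ℝ)..tc, (D * δ) ^ 2 := by
    apply intervalIntegral.integral_mono_on htc.le hint intervalIntegrable_const
    intro s hs
    exact pow_le_pow_left₀ (norm_nonneg _) (key s hs) 2
  rw [intervalIntegral.integral_const] at hmono
  have hfin : α * ‖y‖ ^ 2 ≤ tc * (D * δ) ^ 2 := by
    calc α * ‖y‖ ^ 2 ≤ _ := hobs y
      _ ≤ (tc - 0) • ((D * δ) ^ 2) := hmono
      _ = tc * (D * δ) ^ 2 := by simp [smul_eq_mul]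
  have hδsq : δ ^ 2 ≤ δ := by nlinarith
  have h2 : α * ‖y‖ ^ 2 ≤ α * ε ^ 2 := by nlinarith [mul_nonneg (mul_nonneg htc.le (sq_nonneg D)) hδ0.le]
  have h3 : ‖y‖ ^ 2 ≤ ε ^ 2 := le_of_mul_le_mul_left (by linarith) hα
  nlinarith [norm_nonneg y]
end

section
/- Let Y_u be a finite-dimensional real Hilbert space, Y_s a real Hilbert space, and U a real Hilbert space. Let A_u : Y_u → Y_u, A_s : Y_s → Y_s, C_u : Y_u → U, C_s : Y_s → U be bounded linear operators such that (a) ‖exp(s·A_s)‖ ≤ M e^{−μ s} for all s ≥ 0 with M ≥ 1, μ > 0, and (b) there are t_c > 0, α > 0 with ∫_0^{t_c} ‖C_u(exp(s·A_u) y)‖_U² ds ≥ α ‖y‖² for all y ∈ Y_u. Let t₁, t₂ : ℝ_{≥0} → ℝ_{≥0} satisfy t₁(T) ≤ t₂(T) ≤ T and t₂(T) − t₁(T) → ∞ as T → ∞. For each T > 0 let λ_u^T : ℝ → Y_u and λ_s^T : ℝ → Y_s be differentiable and satisfy on [t₁(T), t₂(T)] the coupled system λ_u^T′ = −A_u λ_u^T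 − p₁(s)λ_u^T − p₂(s)λ_s^T + q₁(s), λ_s^T′ = −A_s λ_s^T − p₃(s)λ_u^T − p₄(s)λ_s^T + q₂(s), 0 = C_u λ_u^T + C_s λ_s^T + m₁(s)λ_u^T + m₂(s)λ_s^T + n(s), where the operator-valued coefficients p₁,…,p₄, m₁, m₂ and the vector-valued terms q₁, q₂, n are continuous with suprema over [t₁(T), t₂(T)] tending to 0 as T → ∞, and assume sup_T sup_{t ∈ [t₁(T),t₂(T)]} (‖λ_u^T(t)‖ + ‖λ_s^T(t)‖) < ∞. Then for every ε > 0 there exists T₀ > 0 such that for all T ≥ T₀ and all t ∈ [t₁(T) + t_c, t₁(T) + (t₂(T) − t₁(T))/2], ‖λ_u^T(t)‖ + ‖λ_s^T(t)‖ ≤ ε. -/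
open MeasureTheory intervalIntegral Filter

set_option synthInstance.maxHeartbeats 1000000
set_option maxHeartbeats 4000000

lemma my_norm_exp_le {E : Type*} [NormedAddCommGroup E] [NormedSpace ℝ E]
    [CompleteSpace E] (A : E →L[ℝ] E) :
    ‖NormedSpace.exp A‖ ≤ Real.exp ‖A‖ := by
  rw [NormedSpace.exp_eq_tsum ℝ]
  have hsum : Summable fun n : ℕ => ‖((n.factorial : ℝ))⁻¹ • A ^ n‖ :=
    NormedSpace.norm_expSeries_summable' (𝕂 := ℝ) A
  have hsum2 : Summable fun n : ℕ => ‖A‖ ^ n / n.factorial :=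
    Real.summable_pow_div_factorial ‖A‖
  have hle : ∀ n : ℕ, ‖((n.factorial : ℝ))⁻¹ • A ^ n‖ ≤ ‖A‖ ^ n / n.factorial := by
    intro n
    have h0 : ‖((n.factorial : ℝ))⁻¹ • A ^ n‖ = ((n.factorial : ℝ))⁻¹ * ‖A ^ n‖ := by
      have := norm_smul (α := ℝ) (((n.factorial : ℝ))⁻¹) (A ^ n)
      simpa using this
    rw [h0, div_eq_inv_mul]
    gcongr
    rcases Nat.eq_zero_or_pos n with h | h
    · subst h
      rw [pow_zero, pow_zero]; exact ContinuousLinearMap.norm_id_le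
    · exact norm_pow_le' A h
  calc ‖∑' n : ℕ, ((n.factorial : ℝ))⁻¹ • A ^ n‖
      ≤ ∑' n : ℕ, ‖((n.factorial : ℝ))⁻¹ • A ^ n‖ := norm_tsum_le_tsum_norm hsum
    _ ≤ ∑' n : ℕ, ‖A‖ ^ n / n.factorial := Summable.tsum_le_tsum hle hsum hsum2
    _ = Real.exp ‖A‖ := by
        rw [Real.exp_eq_exp_ℝ, NormedSpace.exp_eq_tsum_div]

lemma my_flow {E : Type*} [NormedAddCommGroup E] [NormedSpace ℝ E] [CompleteSpace E]
    (A : E →L[ℝ] E) (f g : ℝ → E) (a b : ℝ) (hab : a ≤ b)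
    (hf : ∀ s ∈ Set.Icc a b, HasDerivAt f (-(A (f s)) + g s) s)
    (hg : ContinuousOn g (Set.Icc a b)) :
    NormedSpace.exp ((b - a) • A) (f b) - f a
      = ∫ σ in a..b, NormedSpace.exp ((σ - a) • A) (g σ) := by
  set E' : ℝ → (E →L[ℝ] E) := fun τ => NormedSpace.exp ((τ - a) • A) with hE'
  have hEc : Continuous E' := by
    exact (continuous_iff_continuousAt.2 fun x =>
      (NormedSpace.exp_analytic (𝕂 := ℝ) x).continuousAt).comp
      (((continuous_id.sub continuous_const).smul continuous_const))
  have hEd : ∀ σ : ℝ, HasDerivAt E' (A * E' σ) σ := by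
    intro σ
    have h1 : HasDerivAt (fun u : ℝ => NormedSpace.exp (u • A))
        (A * NormedSpace.exp ((σ - a) • A)) (σ - a) :=
      hasDerivAt_exp_smul_const' (𝕂 := ℝ) A (σ - a)
    simpa using h1.comp_sub_const σ a
  have hcomm : ∀ σ : ℝ, ∀ x : E, (E' σ) (A x) = A ((E' σ) x) := by
    intro σ x
    have hc : Commute ((σ - a) • A) A := by
      show _ = _
      rw [smul_mul_assoc, mul_smul_comm]
    have h : Commute (NormedSpace.exp ((σ - a) • A)) A := hc.exp_left
    have := congrArg (fun L : E →L[ℝ] E => L x) h.eq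
    simpa [ContinuousLinearMap.mul_apply] using this
  have hφ : ∀ σ ∈ Set.Icc a b,
      HasDerivAt (fun τ => (E' τ) (f τ)) ((E' σ) (g σ)) σ := by
    intro σ hσ
    have h := (hEd σ).clm_apply (hf σ hσ)
    have heq : (A * E' σ) (f σ) + (E' σ) (-(A (f σ)) + g σ) = (E' σ) (g σ) := by
      rw [map_add, map_neg, hcomm σ (f σ)]
      simp [ContinuousLinearMap.mul_apply]
    rwa [heq] at h
  have hint : IntervalIntegrable (fun σ => (E' σ) (g σ)) volume a b := by
    apply ContinuousOn.intervalIntegrable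
    rw [Set.uIcc_of_le hab]
    exact (hEc.continuousOn).clm_apply hg
  have := intervalIntegral.integral_eq_sub_of_hasDerivAt
    (f := fun τ => (E' τ) (f τ)) (f' := fun σ => (E' σ) (g σ))
    (by rw [Set.uIcc_of_le hab]; exact hφ) hint
  rw [this]
  simp [hE', sub_self, NormedSpace.exp_zero]

/-- key corollary : norm bound from the flow formula. -/
lemma my_flow_bound {E : Type*} [NormedAddCommGroup E] [NormedSpace ℝ E] [CompleteSpace E]
    (A : E →L[ℝ] E) (f g : ℝ → E) (a b : ℝ) (hab : a ≤ b)
    (hf : ∀ s ∈ Set.Icc a b, HasDerivAt f (-(A (f s)) + g s) s)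
    (hg : ContinuousOn g (Set.Icc a b)) (C : ℝ)
    (hC : ∀ σ ∈ Set.Icc a b, ‖NormedSpace.exp ((σ - a) • A) (g σ)‖ ≤ C) :
    ‖NormedSpace.exp ((b - a) • A) (f b) - f a‖ ≤ C * (b - a) := by
  rw [my_flow A f g a b hab hf hg]
  have h := intervalIntegral.norm_integral_le_of_norm_le_const
    (C := C) (f := fun σ => NormedSpace.exp ((σ - a) • A) (g σ)) (a := a) (b := b) ?_
  · calc _ ≤ C * |b - a| := h
      _ = C * (b - a) := by rw [abs_of_nonneg (by linarith)]
  · intro σ hσ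
    rw [Set.uIoc_of_le hab] at hσ
    exact hC σ ⟨hσ.1.le, hσ.2⟩


/-- (Adjoint turnpike for detectable systems with
finite-dimensional unstable part, decomposed bounded-generator form.) The adjoint
is split into an exactly observable finite-dimensional part `(A_u, C_u)` and an
exponentially stable part `A_s`; uniform boundedness and vanishing remainder
terms yield the interval turnpike property on
`[t₁(T) + t_c, t₁(T) + (t₂(T) − t₁(T))/2]`. -/
theorem adjoint_interval_turnpike_decomposed
    {Yu Ys U : Type*}
    [NormedAddCommGroup Yu] [InnerProductSpace ℝ Yu] [FiniteDimensional ℝ Yu]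
    [NormedAddCommGroup Ys] [InnerProductSpace ℝ Ys] [CompleteSpace Ys]
    [NormedAddCommGroup U] [InnerProductSpace ℝ U] [CompleteSpace U]
    (Au : Yu →L[ℝ] Yu) (As : Ys →L[ℝ] Ys) (Cu : Yu →L[ℝ] U) (Cs : Ys →L[ℝ] U)
    (M μ : ℝ) (hM : 1 ≤ M) (hμ : 0 < μ)
    (hstab : ∀ s : ℝ, 0 ≤ s → ‖NormedSpace.exp (s • As)‖ ≤ M * Real.exp (-μ * s))
    (tc α : ℝ) (htc : 0 < tc) (hα : 0 < α)
    (hobs : ∀ y : Yu,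
      α * ‖y‖ ^ 2 ≤ ∫ s in (0:ℝ)..tc, ‖Cu ((NormedSpace.exp (s • Au)) y)‖ ^ 2)
    (t₁ t₂ : ℝ → ℝ) (ht₁ : ∀ T, 0 ≤ t₁ T) (ht₁₂ : ∀ T, t₁ T ≤ t₂ T)
    (ht₂ : ∀ T, t₂ T ≤ T)
    (hgrow : Tendsto (fun T => t₂ T - t₁ T) atTop atTop)
    (lamu : ℝ → ℝ → Yu) (lams : ℝ → ℝ → Ys)
    (hdiffu : ∀ T > (0 : ℝ), Differentiable ℝ (lamu T))
    (hdiffs : ∀ T > (0 : ℝ), Differentiable ℝ (lams T))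
    (p₁ : ℝ → ℝ → (Yu →L[ℝ] Yu)) (p₂ : ℝ → ℝ → (Ys →L[ℝ] Yu))
    (p₃ : ℝ → ℝ → (Yu →L[ℝ] Ys)) (p₄ : ℝ → ℝ → (Ys →L[ℝ] Ys))
    (m₁ : ℝ → ℝ → (Yu →L[ℝ] U)) (m₂ : ℝ → ℝ → (Ys →L[ℝ] U))
    (q₁ : ℝ → ℝ → Yu) (q₂ : ℝ → ℝ → Ys) (nn : ℝ → ℝ → U)
    (hp₁ : ∀ T > (0 : ℝ), Continuous (p₁ T)) (hp₂ : ∀ T > (0 : ℝ), Continuous (p₂ T))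
    (hp₃ : ∀ T > (0 : ℝ), Continuous (p₃ T)) (hp₄ : ∀ T > (0 : ℝ), Continuous (p₄ T))
    (hm₁ : ∀ T > (0 : ℝ), Continuous (m₁ T)) (hm₂ : ∀ T > (0 : ℝ), Continuous (m₂ T))
    (hq₁ : ∀ T > (0 : ℝ), Continuous (q₁ T)) (hq₂ : ∀ T > (0 : ℝ), Continuous (q₂ T))
    (hn : ∀ T > (0 : ℝ), Continuous (nn T))
    (hodeu : ∀ T > (0 : ℝ), ∀ s ∈ Set.Icc (t₁ T) (t₂ T),
      HasDerivAt (lamu T)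
        (-(Au (lamu T s)) - (p₁ T s) (lamu T s) - (p₂ T s) (lams T s) + q₁ T s) s)
    (hodes : ∀ T > (0 : ℝ), ∀ s ∈ Set.Icc (t₁ T) (t₂ T),
      HasDerivAt (lams T)
        (-(As (lams T s)) - (p₃ T s) (lamu T s) - (p₄ T s) (lams T s) + q₂ T s) s)
    (halg : ∀ T > (0 : ℝ), ∀ s ∈ Set.Icc (t₁ T) (t₂ T),
      (0 : U) = Cu (lamu T s) + Cs (lams T s)
        + (m₁ T s) (lamu T s) + (m₂ T s) (lams T s) + nn T s)
    (hbdd : ∃ B : ℝ, ∀ T > (0 : ℝ), ∀ t ∈ Set.Icc (t₁ T) (t₂ T),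
      ‖lamu T t‖ + ‖lams T t‖ ≤ B)
    (hres : ∀ ε > (0 : ℝ), ∃ T₀ > (0 : ℝ), ∀ T ≥ T₀,
      ∀ s ∈ Set.Icc (t₁ T) (t₂ T),
        ‖p₁ T s‖ ≤ ε ∧ ‖p₂ T s‖ ≤ ε ∧ ‖p₃ T s‖ ≤ ε ∧ ‖p₄ T s‖ ≤ ε ∧
        ‖m₁ T s‖ ≤ ε ∧ ‖m₂ T s‖ ≤ ε ∧
        ‖q₁ T s‖ ≤ ε ∧ ‖q₂ T s‖ ≤ ε ∧ ‖nn T s‖ ≤ ε) :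
    ∀ ε > (0 : ℝ), ∃ T₀ > (0 : ℝ), ∀ T ≥ T₀,
      ∀ t ∈ Set.Icc (t₁ T + tc) (t₁ T + (t₂ T - t₁ T) / 2),
        ‖lamu T t‖ + ‖lams T t‖ ≤ ε := by
  intro ε hε
  have hM0 : (0:ℝ) < M := by linarith
  obtain ⟨B₀, hB₀⟩ := hbdd
  set B := max B₀ 1 with hBdef
  have hB1 : (1:ℝ) ≤ B := le_max_right _ _
  have hB0 : (0:ℝ) < B := by linarith
  have hBbd : ∀ T > (0:ℝ), ∀ τ ∈ Set.Icc (t₁ T) (t₂ T),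
      ‖lamu T τ‖ ≤ B ∧ ‖lams T τ‖ ≤ B := by
    intro T hT τ hτ
    have h := hB₀ T hT τ hτ
    have hB₀B : B₀ ≤ B := le_max_left _ _
    have h1 := norm_nonneg (lamu T τ)
    have h2 := norm_nonneg (lams T τ)
    exact ⟨by linarith, by linarith⟩
  set c := Real.sqrt (tc / α) with hcdef
  have hc0 : 0 < c := Real.sqrt_pos.mpr (by positivity)
  have hc2 : c ^ 2 = tc / α := Real.sq_sqrt (by positivity)
  set E₀ := Real.exp (tc * ‖Au‖) with hE₀def
  have hE₀0 : 0 < E₀ := Real.exp_pos _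
  have hden : (0:ℝ) < c * ‖Cs‖ + 1 := by
    have := mul_nonneg hc0.le (norm_nonneg Cs); linarith
  set ρ := ε / (2 * (c * ‖Cs‖ + 1)) with hρdef
  have hρ0 : (0:ℝ) < ρ := div_pos hε (by linarith)
  -- choose ℓ
  have htend : Tendsto (fun l : ℝ => M * B * Real.exp (-μ * l)) atTop (nhds 0) := by
    have h0 : Tendsto (fun l : ℝ => μ * l) atTop atTop :=
      Tendsto.const_mul_atTop hμ tendsto_id
    have h1 : Tendsto (fun l : ℝ => -(μ * l)) atTop atBot :=
      tendsto_neg_atTop_atBot.comp h0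
    have h2 := Real.tendsto_exp_atBot.comp h1
    have h3 := h2.const_mul (M * B)
    simp only [mul_zero] at h3
    convert h3 using 2 with l
    simp [Function.comp, neg_mul]
  have hev : ∀ᶠ l : ℝ in atTop, M * B * Real.exp (-μ * l) < ρ / 2 :=
    htend.eventually_lt_const (by linarith)
  obtain ⟨ℓ, hℓ⟩ := ((eventually_ge_atTop (1:ℝ)).and hev).exists
  obtain ⟨hℓ1, hℓsm⟩ := hℓ
  have hℓ0 : (0:ℝ) < ℓ := by linarith
  -- choose δ
  have hpos1 : (0:ℝ) < 2 * (M * (2 * B + 1) * ℓ) := by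
    have := mul_pos (mul_pos hM0 (by linarith : (0:ℝ) < 2 * B + 1)) hℓ0
    linarith
  set K := (2 * B + 1) * (1 + ‖Cu‖ * E₀ * tc) with hKdef
  have hK0 : (0:ℝ) < K := by
    have h1 : (0:ℝ) ≤ ‖Cu‖ * E₀ * tc :=
      mul_nonneg (mul_nonneg (norm_nonneg _) hE₀0.le) htc.le
    have h2 : (0:ℝ) < 2 * B + 1 := by linarith
    exact mul_pos h2 (by linarith)
  have hposcK : (0:ℝ) < 2 * (c * K) := by
    have := mul_pos hc0 hK0; linarith
  set δ := min (ρ / (2 * (M * (2 * B + 1) * ℓ))) (ε / (2 * (c * K))) with hδdef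
  have hδ0 : (0:ℝ) < δ :=
    lt_min (div_pos hρ0 hpos1) (div_pos hε hposcK)
  have hδ1 : δ * (2 * (M * (2 * B + 1) * ℓ)) ≤ ρ :=
    (le_div_iff₀ hpos1).mp (min_le_left _ _)
  have hδ2 : δ * (2 * (c * K)) ≤ ε :=
    (le_div_iff₀ hposcK).mp (min_le_right _ _)
  have hδB : (0:ℝ) ≤ δ * (2 * B + 1) := mul_nonneg hδ0.le (by linarith)
  -- choose T₀
  obtain ⟨T₀₁, hT₀₁, hres'⟩ := hres δ hδ0
  obtain ⟨T₀₂, hT₀₂⟩ := eventually_atTop.mp (hgrow.eventually_ge_atTop (2 * ℓ + 2 * tc))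
  refine ⟨max T₀₁ T₀₂, lt_of_lt_of_le hT₀₁ (le_max_left _ _), ?_⟩
  intro T hT t ht
  have hTT₁ : T₀₁ ≤ T := le_trans (le_max_left _ _) hT
  have hTT₂ : T₀₂ ≤ T := le_trans (le_max_right _ _) hT
  have hT0 : (0:ℝ) < T := lt_of_lt_of_le hT₀₁ hTT₁
  have hL : 2 * ℓ + 2 * tc ≤ t₂ T - t₁ T := hT₀₂ T hTT₂
  obtain ⟨htl, htr⟩ := ht
  have hclamu : Continuous (lamu T) := (hdiffu T hT0).continuous
  have hclams : Continuous (lams T) := (hdiffs T hT0).continuous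
  -- the remainder functions
  set gs : ℝ → Ys := fun σ => -((p₃ T σ) (lamu T σ)) - (p₄ T σ) (lams T σ) + q₂ T σ
    with hgsdef
  have hgscont : Continuous gs :=
    (((hp₃ T hT0).clm_apply hclamu).neg.sub ((hp₄ T hT0).clm_apply hclams)).add (hq₂ T hT0)
  set gu : ℝ → Yu := fun σ => -((p₁ T σ) (lamu T σ)) - (p₂ T σ) (lams T σ) + q₁ T σ
    with hgudef
  have hgucont : Continuous gu :=
    (((hp₁ T hT0).clm_apply hclamu).neg.sub ((hp₂ T hT0).clm_apply hclams)).add (hq₁ T hT0)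
  have hgsbd : ∀ σ ∈ Set.Icc (t₁ T) (t₂ T), ‖gs σ‖ ≤ δ * (2 * B + 1) := by
    intro σ hσ
    obtain ⟨h1, h2, h3, h4, h5, h6, h7, h8, h9⟩ := hres' T hTT₁ σ hσ
    obtain ⟨hbu, hbs⟩ := hBbd T hT0 σ hσ
    have e1 : ‖(p₃ T σ) (lamu T σ)‖ ≤ δ * B :=
      le_trans ((p₃ T σ).le_opNorm _) (mul_le_mul h3 hbu (norm_nonneg _) hδ0.le)
    have e2 : ‖(p₄ T σ) (lams T σ)‖ ≤ δ * B :=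
      le_trans ((p₄ T σ).le_opNorm _) (mul_le_mul h4 hbs (norm_nonneg _) hδ0.le)
    have t1 : ‖gs σ‖ ≤ ‖-((p₃ T σ) (lamu T σ)) - (p₄ T σ) (lams T σ)‖ + ‖q₂ T σ‖ :=
      norm_add_le _ _
    have t2 : ‖-((p₃ T σ) (lamu T σ)) - (p₄ T σ) (lams T σ)‖
        ≤ ‖-((p₃ T σ) (lamu T σ))‖ + ‖(p₄ T σ) (lams T σ)‖ := norm_sub_le _ _
    rw [norm_neg] at t2
    have : ‖gs σ‖ ≤ δ * B + δ * B + δ := by linarith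
    linarith [this]
  have hgubd : ∀ σ ∈ Set.Icc (t₁ T) (t₂ T), ‖gu σ‖ ≤ δ * (2 * B + 1) := by
    intro σ hσ
    obtain ⟨h1, h2, h3, h4, h5, h6, h7, h8, h9⟩ := hres' T hTT₁ σ hσ
    obtain ⟨hbu, hbs⟩ := hBbd T hT0 σ hσ
    have e1 : ‖(p₁ T σ) (lamu T σ)‖ ≤ δ * B :=
      le_trans ((p₁ T σ).le_opNorm _) (mul_le_mul h1 hbu (norm_nonneg _) hδ0.le)
    have e2 : ‖(p₂ T σ) (lams T σ)‖ ≤ δ * B :=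
      le_trans ((p₂ T σ).le_opNorm _) (mul_le_mul h2 hbs (norm_nonneg _) hδ0.le)
    have t1 : ‖gu σ‖ ≤ ‖-((p₁ T σ) (lamu T σ)) - (p₂ T σ) (lams T σ)‖ + ‖q₁ T σ‖ :=
      norm_add_le _ _
    have t2 : ‖-((p₁ T σ) (lamu T σ)) - (p₂ T σ) (lams T σ)‖
        ≤ ‖-((p₁ T σ) (lamu T σ))‖ + ‖(p₂ T σ) (lams T σ)‖ := norm_sub_le _ _
    rw [norm_neg] at t2
    have : ‖gu σ‖ ≤ δ * B + δ * B + δ := by linarith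
    linarith [this]
  -- stable estimate
  have hstable : ∀ a, t₁ T ≤ a → a ≤ t₁ T + (t₂ T - t₁ T) / 2 → ‖lams T a‖ ≤ ρ := by
    intro a ha1 ha2
    have hab : a ≤ a + ℓ := by linarith
    have hsub : Set.Icc a (a + ℓ) ⊆ Set.Icc (t₁ T) (t₂ T) := by
      intro σ hσ
      exact ⟨le_trans ha1 hσ.1, by linarith [hσ.2]⟩
    have hf : ∀ σ ∈ Set.Icc a (a + ℓ),
        HasDerivAt (lams T) (-(As (lams T σ)) + gs σ) σ := by
      intro σ hσ
      have h := hodes T hT0 σ (hsub hσ)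
      have heq : -(As (lams T σ)) - (p₃ T σ) (lamu T σ) - (p₄ T σ) (lams T σ) + q₂ T σ
          = -(As (lams T σ)) + gs σ := by
        simp only [hgsdef]; abel
      rwa [heq] at h
    have hC : ∀ σ ∈ Set.Icc a (a + ℓ),
        ‖NormedSpace.exp ((σ - a) • As) (gs σ)‖ ≤ M * (δ * (2 * B + 1)) := by
      intro σ hσ
      have h1 := (NormedSpace.exp ((σ - a) • As)).le_opNorm (gs σ)
      have h2 := hstab (σ - a) (by linarith [hσ.1])
      have h3 : Real.exp (-μ * (σ - a)) ≤ 1 := by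
        rw [Real.exp_le_one_iff]
        have hσa : 0 ≤ σ - a := by linarith [hσ.1]
        have := mul_nonneg hμ.le hσa
        linarith
      have h4 := hgsbd σ (hsub hσ)
      have h5 : ‖NormedSpace.exp ((σ - a) • As)‖ * ‖gs σ‖
          ≤ (M * Real.exp (-μ * (σ - a))) * (δ * (2 * B + 1)) :=
        mul_le_mul h2 h4 (norm_nonneg _) (mul_nonneg hM0.le (Real.exp_pos _).le)
      have he1 : M * Real.exp (-μ * (σ - a)) ≤ M := by
        have := mul_le_mul_of_nonneg_left h3 hM0.le
        linarith
      have h6 : (M * Real.exp (-μ * (σ - a))) * (δ * (2 * B + 1)) ≤ M * (δ * (2 * B + 1)) :=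
        mul_le_mul_of_nonneg_right he1 hδB
      linarith
    have hflow := my_flow_bound As (lams T) gs a (a + ℓ) hab hf hgscont.continuousOn
      _ hC
    have hsimp : a + ℓ - a = ℓ := by ring
    rw [hsimp] at hflow
    have hXbd : ‖NormedSpace.exp (ℓ • As) (lams T (a + ℓ))‖ ≤ M * Real.exp (-μ * ℓ) * B := by
      have h1 := (NormedSpace.exp (ℓ • As)).le_opNorm (lams T (a + ℓ))
      have h2 := hstab ℓ hℓ0.le
      have h3 := (hBbd T hT0 (a + ℓ) (hsub ⟨by linarith, le_refl _⟩)).2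
      have h4 : ‖NormedSpace.exp (ℓ • As)‖ * ‖lams T (a + ℓ)‖
          ≤ (M * Real.exp (-μ * ℓ)) * B :=
        mul_le_mul h2 h3 (norm_nonneg _) (mul_nonneg hM0.le (Real.exp_pos _).le)
      linarith
    have htri : ‖lams T a‖ ≤ ‖NormedSpace.exp (ℓ • As) (lams T (a + ℓ))‖
        + ‖NormedSpace.exp (ℓ • As) (lams T (a + ℓ)) - lams T a‖ := by
      calc ‖lams T a‖ = ‖NormedSpace.exp (ℓ • As) (lams T (a + ℓ))
            - (NormedSpace.exp (ℓ • As) (lams T (a + ℓ)) - lams T a)‖ := by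
            rw [sub_sub_cancel]
        _ ≤ _ := norm_sub_le _ _
    have e1 : M * (δ * (2 * B + 1)) * ℓ ≤ ρ / 2 := by
      have heq : M * (δ * (2 * B + 1)) * ℓ * 2 = δ * (2 * (M * (2 * B + 1) * ℓ)) := by ring
      linarith [hδ1]
    have e2 : M * Real.exp (-μ * ℓ) * B ≤ ρ / 2 := by
      have heq2 : M * Real.exp (-μ * ℓ) * B = M * B * Real.exp (-μ * ℓ) := by ring
      linarith [hℓsm]
    linarith
  -- unstable pointwise bound
  set κ := ‖Cs‖ * ρ + δ * (2 * B + 1) + ‖Cu‖ * (E₀ * (δ * (2 * B + 1)) * tc) with hκdef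
  have hκ0 : (0:ℝ) ≤ κ := by
    have h1 : (0:ℝ) ≤ ‖Cs‖ * ρ := mul_nonneg (norm_nonneg _) hρ0.le
    have h2 : (0:ℝ) ≤ ‖Cu‖ * (E₀ * (δ * (2 * B + 1)) * tc) :=
      mul_nonneg (norm_nonneg _) (mul_nonneg (mul_nonneg hE₀0.le hδB) htc.le)
    linarith
  have hLpos : (0:ℝ) < t₂ T - t₁ T := by linarith
  have hpt : ∀ s, 0 ≤ s → s ≤ tc →
      ‖Cu (NormedSpace.exp (s • Au) (lamu T t))‖ ≤ κ := by
    intro s hs0 hstc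
    have hab : t - s ≤ t := by linarith
    have hsub : Set.Icc (t - s) t ⊆ Set.Icc (t₁ T) (t₂ T) := by
      intro σ hσ
      constructor
      · linarith [hσ.1]
      · have : t ≤ t₂ T := by linarith
        linarith [hσ.2]
    have hf : ∀ σ ∈ Set.Icc (t - s) t,
        HasDerivAt (lamu T) (-(Au (lamu T σ)) + gu σ) σ := by
      intro σ hσ
      have h := hodeu T hT0 σ (hsub hσ)
      have heq : -(Au (lamu T σ)) - (p₁ T σ) (lamu T σ) - (p₂ T σ) (lams T σ) + q₁ T σ
          = -(Au (lamu T σ)) + gu σ := by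
        simp only [hgudef]; abel
      rwa [heq] at h
    have hC : ∀ σ ∈ Set.Icc (t - s) t,
        ‖NormedSpace.exp ((σ - (t - s)) • Au) (gu σ)‖ ≤ E₀ * (δ * (2 * B + 1)) := by
      intro σ hσ
      have h1 := (NormedSpace.exp ((σ - (t - s)) • Au)).le_opNorm (gu σ)
      have h2 : ‖NormedSpace.exp ((σ - (t - s)) • Au)‖ ≤ E₀ := by
        refine le_trans (my_norm_exp_le _) ?_
        have hnr : ‖(σ - (t - s)) • Au‖ = |σ - (t - s)| * ‖Au‖ := by
          have := norm_smul (α := ℝ) (σ - (t - s)) Au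
          simpa [Real.norm_eq_abs] using this
        rw [hE₀def, hnr]
        apply Real.exp_le_exp.mpr
        have habs : |σ - (t - s)| ≤ tc := by
          rw [abs_of_nonneg (by linarith [hσ.1])]
          linarith [hσ.2]
        exact mul_le_mul_of_nonneg_right habs (norm_nonneg Au)
      have h3 := hgubd σ (hsub hσ)
      exact le_trans h1 (mul_le_mul h2 h3 (norm_nonneg _) hE₀0.le)
    have hflow := my_flow_bound Au (lamu T) gu (t - s) t hab hf hgucont.continuousOn
      _ hC
    have hts : t - (t - s) = s := by ring
    rw [hts] at hflow
    have haI : t - s ∈ Set.Icc (t₁ T) (t₂ T) := hsub ⟨le_refl _, hab⟩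
    have halg' := (halg T hT0 (t - s) haI).symm
    have hCua : Cu (lamu T (t - s)) = -(Cs (lams T (t - s)) + (m₁ T (t - s)) (lamu T (t - s))
        + (m₂ T (t - s)) (lams T (t - s)) + nn T (t - s)) := by
      apply eq_neg_of_add_eq_zero_left
      calc Cu (lamu T (t - s)) + (Cs (lams T (t - s)) + (m₁ T (t - s)) (lamu T (t - s))
            + (m₂ T (t - s)) (lams T (t - s)) + nn T (t - s))
          = Cu (lamu T (t - s)) + Cs (lams T (t - s)) + (m₁ T (t - s)) (lamu T (t - s))
            + (m₂ T (t - s)) (lams T (t - s)) + nn T (t - s) := by abel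
        _ = 0 := halg'
    obtain ⟨h1, h2, h3, h4, h5, h6, h7, h8, h9⟩ := hres' T hTT₁ (t - s) haI
    obtain ⟨hbu, hbs⟩ := hBbd T hT0 (t - s) haI
    have hsa : ‖lams T (t - s)‖ ≤ ρ := hstable (t - s) (by linarith) (by linarith)
    have hCubd : ‖Cu (lamu T (t - s))‖ ≤ ‖Cs‖ * ρ + δ * (2 * B + 1) := by
      rw [hCua, norm_neg]
      have e1 : ‖Cs (lams T (t - s))‖ ≤ ‖Cs‖ * ρ :=
        le_trans (Cs.le_opNorm _) (mul_le_mul_of_nonneg_left hsa (norm_nonneg Cs))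
      have e2 : ‖(m₁ T (t - s)) (lamu T (t - s))‖ ≤ δ * B :=
        le_trans ((m₁ T (t - s)).le_opNorm _) (mul_le_mul h5 hbu (norm_nonneg _) hδ0.le)
      have e3 : ‖(m₂ T (t - s)) (lams T (t - s))‖ ≤ δ * B :=
        le_trans ((m₂ T (t - s)).le_opNorm _) (mul_le_mul h6 hbs (norm_nonneg _) hδ0.le)
      have tri1 : ‖Cs (lams T (t - s)) + (m₁ T (t - s)) (lamu T (t - s))
          + (m₂ T (t - s)) (lams T (t - s)) + nn T (t - s)‖
          ≤ ‖Cs (lams T (t - s)) + (m₁ T (t - s)) (lamu T (t - s))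
          + (m₂ T (t - s)) (lams T (t - s))‖ + ‖nn T (t - s)‖ := norm_add_le _ _
      have tri2 : ‖Cs (lams T (t - s)) + (m₁ T (t - s)) (lamu T (t - s))
          + (m₂ T (t - s)) (lams T (t - s))‖
          ≤ ‖Cs (lams T (t - s)) + (m₁ T (t - s)) (lamu T (t - s))‖
          + ‖(m₂ T (t - s)) (lams T (t - s))‖ := norm_add_le _ _
      have tri3 : ‖Cs (lams T (t - s)) + (m₁ T (t - s)) (lamu T (t - s))‖
          ≤ ‖Cs (lams T (t - s))‖ + ‖(m₁ T (t - s)) (lamu T (t - s))‖ := norm_add_le _ _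
      linarith
    have hsplit : Cu (NormedSpace.exp (s • Au) (lamu T t)) = Cu (lamu T (t - s))
        + Cu (NormedSpace.exp (s • Au) (lamu T t) - lamu T (t - s)) := by
      rw [map_sub]; abel
    rw [hsplit]
    have hbig : ‖Cu (NormedSpace.exp (s • Au) (lamu T t) - lamu T (t - s))‖
        ≤ ‖Cu‖ * (E₀ * (δ * (2 * B + 1)) * tc) := by
      refine le_trans (Cu.le_opNorm _) ?_
      have hmon : E₀ * (δ * (2 * B + 1)) * s ≤ E₀ * (δ * (2 * B + 1)) * tc := by
        have hnn : (0:ℝ) ≤ E₀ * (δ * (2 * B + 1)) := mul_nonneg hE₀0.le hδB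
        exact mul_le_mul_of_nonneg_left hstc hnn
      exact mul_le_mul_of_nonneg_left (le_trans hflow hmon) (norm_nonneg Cu)
    calc ‖Cu (lamu T (t - s)) + Cu (NormedSpace.exp (s • Au) (lamu T t) - lamu T (t - s))‖
        ≤ ‖Cu (lamu T (t - s))‖
          + ‖Cu (NormedSpace.exp (s • Au) (lamu T t) - lamu T (t - s))‖ := norm_add_le _ _
      _ ≤ κ := by rw [hκdef]; linarith
  -- observability
  have hI : α * ‖lamu T t‖ ^ 2 ≤ κ ^ 2 * tc := by
    refine le_trans (hobs (lamu T t)) ?_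
    have hb := intervalIntegral.norm_integral_le_of_norm_le_const (C := κ ^ 2)
      (f := fun s => ‖Cu (NormedSpace.exp (s • Au) (lamu T t))‖ ^ 2)
      (a := (0:ℝ)) (b := tc) ?_
    · calc (∫ s in (0:ℝ)..tc, ‖Cu (NormedSpace.exp (s • Au) (lamu T t))‖ ^ 2)
          ≤ ‖∫ s in (0:ℝ)..tc, ‖Cu (NormedSpace.exp (s • Au) (lamu T t))‖ ^ 2‖ :=
            le_abs_self _
        _ ≤ κ ^ 2 * |tc - 0| := hb
        _ = κ ^ 2 * tc := by rw [sub_zero, abs_of_pos htc]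
    · intro s hs
      rw [Set.uIoc_of_le htc.le] at hs
      have hh := hpt s hs.1.le hs.2
      rw [Real.norm_eq_abs, abs_of_nonneg (by positivity)]
      exact pow_le_pow_left₀ (norm_nonneg _) hh 2
  have hyb : ‖lamu T t‖ ≤ c * κ := by
    have h2 : (c * κ) ^ 2 = κ ^ 2 * tc / α := by
      rw [mul_pow, hc2]; field_simp
    have h1 : ‖lamu T t‖ ^ 2 ≤ (c * κ) ^ 2 := by
      rw [h2, le_div_iff₀ hα]
      have heq : ‖lamu T t‖ ^ 2 * α = α * ‖lamu T t‖ ^ 2 := by ring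
      linarith [hI]
    have h3 := Real.sqrt_le_sqrt h1
    rwa [Real.sqrt_sq (norm_nonneg _), Real.sqrt_sq (mul_nonneg hc0.le hκ0)] at h3
  have hst : ‖lams T t‖ ≤ ρ := hstable t (by linarith) htr
  have hκeq : κ = ‖Cs‖ * ρ + δ * K := by rw [hκdef, hKdef]; ring
  have hρeq : ρ * (c * ‖Cs‖ + 1) = ε / 2 := by
    rw [hρdef]; field_simp
  have hδK : c * (δ * K) ≤ ε / 2 := by
    have heq : c * (δ * K) * 2 = δ * (2 * (c * K)) := by ring
    linarith [hδ2]
  calc ‖lamu T t‖ + ‖lams T t‖ ≤ c * κ + ρ := by linarith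
    _ = ρ * (c * ‖Cs‖ + 1) + c * (δ * K) := by rw [hκeq]; ring
    _ ≤ ε / 2 + ε / 2 := by linarith
    _ = ε := by ring
end

section
/- Let Y and U be real Hilbert spaces, A : Y → Y and C : Y → U bounded linear operators, t_c > 0, t ≥ t_c, and w : ℝ → Y continuous. Set K := sup_{s ∈ [0, t_c]} ‖exp(s·A)‖. Then ∫_{t−t_c}^{t} ‖C( ∫_s^t exp((τ−s)·A) w(τ) dτ )‖_U² ds ≤ ‖C‖² K² t_c² ∫_{t−t_c}^{t} ‖w(τ)‖_Y² dτ. -/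
open MeasureTheory intervalIntegral

lemma sq_le_of_forall_lam (X I c : ℝ) (hX : 0 ≤ X) (hI : 0 ≤ I) (hc : 0 < c)
    (h : ∀ l > (0:ℝ), X ≤ l / 2 * I + c / (2 * l)) : X ^ 2 ≤ c * I := by
  rcases eq_or_lt_of_le hX with h0 | hXpos
  · rw [← h0]; simpa using mul_nonneg hc.le hI
  rcases eq_or_lt_of_le hI with hI0 | hIpos
  · exfalso
    have := h (c / X) (by positivity)
    rw [← hI0] at this
    have h2 : c / X / 2 * 0 + c / (2 * (c / X)) = X / 2 := by
      field_simp; ring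
    rw [h2] at this; linarith
  · have key := h (X / I) (by positivity)
    have h2 : X / I / 2 * I = X / 2 := by field_simp
    have h3 : c / (2 * (X / I)) = c * I / (2 * X) := by
      rw [div_eq_div_iff (by positivity) (by positivity)]
      field_simp
    rw [h2, h3] at key
    have h4 : X / 2 ≤ c * I / (2 * X) := by linarith
    rw [div_le_div_iff₀ (by norm_num) (by positivity)] at h4
    nlinarith

lemma amgm_pt (a l : ℝ) (hl : 0 < l) : a ≤ l / 2 * a ^ 2 + 1 / (2 * l) := by
  have h := sq_nonneg (l * a - 1)
  rw [← sub_nonneg]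
  have : l / 2 * a ^ 2 + 1 / (2 * l) - a = (l * a - 1) ^ 2 / (2 * l) := by
    field_simp; ring
  rw [this]; positivity

/-- (Output estimate on the Duhamel term.) For bounded operators
`A : Y → Y`, `C : Y → U` on Hilbert spaces, `t_c > 0`, `t ≥ t_c`, continuous
`w : ℝ → Y`, and `K := sup_{s ∈ [0,t_c]} ‖exp(sA)‖`, one has
`∫_{t−t_c}^t ‖C ∫_s^t exp((τ−s)A) w(τ) dτ‖² ds ≤ ‖C‖² K² t_c² ∫_{t−t_c}^t ‖w‖²`. -/
theorem duhamel_output_estimate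
    {Y U : Type*} [NormedAddCommGroup Y] [InnerProductSpace ℝ Y] [CompleteSpace Y]
    [NormedAddCommGroup U] [InnerProductSpace ℝ U] [CompleteSpace U]
    (A : Y →L[ℝ] Y) (C : Y →L[ℝ] U) (tc t : ℝ) (htc : 0 < tc) (ht : tc ≤ t)
    (w : ℝ → Y) (hw : Continuous w)
    (K : ℝ) (hK : K = ⨆ s : Set.Icc (0 : ℝ) tc, ‖NormedSpace.exp ((s : ℝ) • A)‖) :
    ∫ s in (t - tc)..t,
        ‖C (∫ τ in s..t, (NormedSpace.exp ((τ - s) • A)) (w τ))‖ ^ 2 ≤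
      ‖C‖ ^ 2 * K ^ 2 * tc ^ 2 * ∫ τ in (t - tc)..t, ‖w τ‖ ^ 2 := by
  letI : NormedAlgebra ℚ (Y →L[ℝ] Y) := NormedAlgebra.restrictScalars ℚ ℝ (Y →L[ℝ] Y)
  have htt : t - tc ≤ t := by linarith
  set I := ∫ τ in (t - tc)..t, ‖w τ‖ ^ 2 with hIdef
  have hwsq : Continuous fun τ : ℝ => ‖w τ‖ ^ 2 := hw.norm.pow 2
  have hI : 0 ≤ I := intervalIntegral.integral_nonneg htt fun τ _ => by positivity
  -- bound by K on [0, tc]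
  have hexp : Continuous fun r : ℝ => ‖NormedSpace.exp (r • A)‖ :=
    (NormedSpace.exp_continuous.comp (continuous_id.smul continuous_const)).norm
  have hbdd : BddAbove
      (Set.range fun s : Set.Icc (0 : ℝ) tc => ‖NormedSpace.exp ((s : ℝ) • A)‖) := by
    have hran : (Set.range fun s : Set.Icc (0 : ℝ) tc => ‖NormedSpace.exp ((s : ℝ) • A)‖)
        = (fun r : ℝ => ‖NormedSpace.exp (r • A)‖) '' Set.Icc 0 tc := by
      ext x
      constructor
      · rintro ⟨⟨r, hr⟩, rfl⟩; exact ⟨r, hr, rfl⟩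
      · rintro ⟨r, hr, rfl⟩; exact ⟨⟨r, hr⟩, rfl⟩
    rw [hran]
    exact (isCompact_Icc.image hexp).bddAbove
  have hKmem : ∀ r ∈ Set.Icc (0 : ℝ) tc, ‖NormedSpace.exp (r • A)‖ ≤ K := by
    intro r hr
    rw [hK]
    exact le_ciSup hbdd ⟨r, hr⟩
  have hK0 : 0 ≤ K := le_trans (norm_nonneg _) (hKmem 0 ⟨le_refl 0, htc.le⟩)
  -- joint continuity and continuity of the parametric integral
  have happly : Continuous fun p : (Y →L[ℝ] Y) × Y => p.1 p.2 :=
    isBoundedBilinearMap_apply.continuous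
  have hF : Continuous (Function.uncurry fun (s τ : ℝ) =>
      (NormedSpace.exp ((τ - s) • A)) (w τ)) :=
    happly.comp ((NormedSpace.exp_continuous.comp
      ((continuous_snd.sub continuous_fst).smul continuous_const)).prodMk
      (hw.comp continuous_snd))
  have hparam : Continuous fun s : ℝ => ∫ τ in s..t, (NormedSpace.exp ((τ - s) • A)) (w τ) := by
    have h2 := intervalIntegral.continuous_parametric_intervalIntegral_of_continuous
      (μ := volume) (f := fun (s τ : ℝ) => (NormedSpace.exp ((τ - s) • A)) (w τ))
      (a₀ := t) hF continuous_id
    have heq : (fun s : ℝ => ∫ τ in s..t, (NormedSpace.exp ((τ - s) • A)) (w τ)) =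
        fun s : ℝ => -∫ τ in t..s, (NormedSpace.exp ((τ - s) • A)) (w τ) := by
      funext s; rw [intervalIntegral.integral_symm]
    rw [heq]; exact h2.neg
  -- pointwise bound in s
  have hpt : ∀ s ∈ Set.Icc (t - tc) t,
      ‖C (∫ τ in s..t, (NormedSpace.exp ((τ - s) • A)) (w τ))‖ ^ 2 ≤
        ‖C‖ ^ 2 * K ^ 2 * (tc * I) := by
    intro s hs
    have hst : s ≤ t := hs.2
    set X := ∫ τ in s..t, ‖w τ‖ with hXdef
    have hcontτ : Continuous fun τ : ℝ => (NormedSpace.exp ((τ - s) • A)) (w τ) :=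
      happly.comp ((NormedSpace.exp_continuous.comp
        ((continuous_id.sub continuous_const).smul continuous_const)).prodMk hw)
    have h1 : ‖∫ τ in s..t, (NormedSpace.exp ((τ - s) • A)) (w τ)‖ ≤ K * X := by
      calc ‖∫ τ in s..t, (NormedSpace.exp ((τ - s) • A)) (w τ)‖
          ≤ ∫ τ in s..t, ‖(NormedSpace.exp ((τ - s) • A)) (w τ)‖ :=
            intervalIntegral.norm_integral_le_integral_norm hst
        _ ≤ ∫ τ in s..t, K * ‖w τ‖ := by
            apply intervalIntegral.integral_mono_on hst
              (hcontτ.norm.intervalIntegrable _ _)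
              ((continuous_const.mul hw.norm).intervalIntegrable _ _)
            intro τ hτ
            refine le_trans (ContinuousLinearMap.le_opNorm _ _) ?_
            refine mul_le_mul_of_nonneg_right (hKmem _ ⟨?_, ?_⟩) (norm_nonneg _)
            · linarith [hτ.1]
            · linarith [hτ.2, hs.1]
        _ = K * X := intervalIntegral.integral_const_mul _ _
    have hX0 : 0 ≤ X := intervalIntegral.integral_nonneg hst fun _ _ => norm_nonneg _
    have hX2 : X ^ 2 ≤ tc * I := by
      apply sq_le_of_forall_lam X I tc hX0 hI htc
      intro l hl
      have hint1 : IntervalIntegrable (fun τ : ℝ => l / 2 * ‖w τ‖ ^ 2) volume s t :=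
        (continuous_const.mul hwsq).intervalIntegrable _ _
      have hint2 : IntervalIntegrable (fun _ : ℝ => 1 / (2 * l)) volume s t :=
        intervalIntegrable_const
      calc X ≤ ∫ τ in s..t, (l / 2 * ‖w τ‖ ^ 2 + 1 / (2 * l)) := by
            apply intervalIntegral.integral_mono_on hst (hw.norm.intervalIntegrable _ _)
              (hint1.add hint2)
            intro τ _; exact amgm_pt _ _ hl
        _ = l / 2 * (∫ τ in s..t, ‖w τ‖ ^ 2) + (t - s) * (1 / (2 * l)) := by
            rw [intervalIntegral.integral_add hint1 hint2,
                intervalIntegral.integral_const_mul, intervalIntegral.integral_const,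
                smul_eq_mul]
        _ ≤ l / 2 * I + tc / (2 * l) := by
            have hsub : (∫ τ in s..t, ‖w τ‖ ^ 2) ≤ I :=
              intervalIntegral.integral_mono_interval hs.1 hst le_rfl
                (Filter.Eventually.of_forall fun τ => by positivity)
                (hwsq.intervalIntegrable _ _)
            have h2 : (t - s) * (1 / (2 * l)) ≤ tc / (2 * l) := by
              rw [div_eq_mul_one_div tc]
              exact mul_le_mul_of_nonneg_right (by linarith [hs.1]) (by positivity)
            have h3 := mul_le_mul_of_nonneg_left hsub (by positivity : (0:ℝ) ≤ l / 2)
            linarith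
    calc ‖C (∫ τ in s..t, (NormedSpace.exp ((τ - s) • A)) (w τ))‖ ^ 2
        ≤ (‖C‖ * (K * X)) ^ 2 := by
          apply pow_le_pow_left₀ (norm_nonneg _)
          exact le_trans (C.le_opNorm _) (mul_le_mul_of_nonneg_left h1 (norm_nonneg C))
      _ = ‖C‖ ^ 2 * K ^ 2 * X ^ 2 := by ring
      _ ≤ ‖C‖ ^ 2 * K ^ 2 * (tc * I) :=
          mul_le_mul_of_nonneg_left hX2 (by positivity)
  -- integrate the pointwise bound
  have hcontS : Continuous fun s : ℝ =>
      ‖C (∫ τ in s..t, (NormedSpace.exp ((τ - s) • A)) (w τ))‖ ^ 2 :=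
    ((C.continuous.comp hparam).norm.pow 2)
  calc ∫ s in (t - tc)..t, ‖C (∫ τ in s..t, (NormedSpace.exp ((τ - s) • A)) (w τ))‖ ^ 2
      ≤ ∫ _ in (t - tc)..t, ‖C‖ ^ 2 * K ^ 2 * (tc * I) :=
        intervalIntegral.integral_mono_on htt (hcontS.intervalIntegrable _ _)
          intervalIntegrable_const hpt
    _ = ‖C‖ ^ 2 * K ^ 2 * tc ^ 2 * I := by
        rw [intervalIntegral.integral_const, smul_eq_mul]; ring
end
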